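/- arXiv:1511.08682 — 4 statements merged into one kernel-verified Lean document; each statement's English description precedes it below -/
import Mathlib

section
/- Let d ≥ 1 and n ≥ 1, and let p : ℝⁿ → ℝ be a multilinear polynomial of degree at most d, i.e. p(x) = Σ_{T ⊆ [n], |T| ≤ d} c_T ∏_{i∈T} x_i for some real coefficients c_T, such that |p(x)| ≤ 1 for every x ∈ {-1,1}ⁿ. Then there exists a d-multilinear form p̃ : (ℝ^{n+1})^d → ℝ (linear in each of its d vector arguments) such that (i) p̃(x̃, x̃, …, x̃) = p(x) for every x ∈ ℝⁿ, where x̃ := (1, x₁, …, xₙ) ∈ ℝ^{n+1}, and (ii) |p̃(z⁽¹⁾, …, z⁽ᵈ⁾)| ≤ B(d) := (1/d!)·Σ_{s=1}^{d} (d choose s)·s^d for all z⁽¹⁾, …, z⁽ᵈ⁾ ∈ {-1,1}^{n+1}. -/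
open scoped BigOperators

/-- `B(d) = (1/d!) · Σ_{s=1}^d (d choose s) · s^d`. -/
noncomputable def Bconst (d : ℕ) : ℝ :=
  (1 / (Nat.factorial d : ℝ)) * ∑ s ∈ Finset.Icc 1 d, (d.choose s : ℝ) * (s : ℝ) ^ d

noncomputable def monoMap (d n : ℕ) (b : Fin d → Fin (n+1)) :
    MultilinearMap ℝ (fun _ : Fin d => (Fin (n+1) → ℝ)) ℝ :=
  (MultilinearMap.mkPiAlgebra ℝ (Fin d) ℝ).compLinearMap (fun j => LinearMap.proj (b j))

@[simp] lemma monoMap_apply (d n : ℕ) (b : Fin d → Fin (n+1)) (z : Fin d → (Fin (n+1) → ℝ)) :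
    monoMap d n b z = ∏ j, z j (b j) := by
  simp [monoMap]

noncomputable def aT (d : ℕ) {n : ℕ} (T : Finset (Fin n)) : Fin d → Fin (n+1) :=
  fun k => if h : (k : ℕ) < T.card then Fin.succ (T.orderEmbOfFin rfl ⟨k, h⟩) else 0

lemma filter_lt_card {d s : ℕ} (hs : s ≤ d) :
    (Finset.univ.filter (fun k : Fin d => (k:ℕ) < s)).card = s := by
  have : Finset.univ.filter (fun k : Fin d => (k:ℕ) < s)
      = Finset.map (Fin.castLEEmb hs) Finset.univ := by
    ext k
    simp only [Finset.mem_filter, Finset.mem_univ, true_and, Finset.mem_map,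
      Fin.castLEEmb_apply]
    constructor
    · intro h; exact ⟨⟨k, h⟩, by simp [Fin.ext_iff]⟩
    · rintro ⟨j, rfl⟩; simpa using j.2
  rw [this, Finset.card_map, Finset.card_univ, Fintype.card_fin]

lemma prod_aT {d n : ℕ} (T : Finset (Fin n)) (hT : T.card ≤ d) (y : Fin (n+1) → ℝ) :
    ∏ k, y (aT d T k) = y 0 ^ (d - T.card) * ∏ i ∈ T, y i.succ := by
  rw [← Finset.prod_filter_mul_prod_filter_not Finset.univ (fun k : Fin d => (k:ℕ) < T.card)]
  have h1 : ∏ k ∈ Finset.univ.filter (fun k : Fin d => ¬ (k:ℕ) < T.card), y (aT d T k)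
      = y 0 ^ (d - T.card) := by
    have hc : (Finset.univ.filter (fun k : Fin d => ¬ (k:ℕ) < T.card)).card = d - T.card := by
      have := Finset.card_filter_add_card_filter_not
        (s := (Finset.univ : Finset (Fin d))) (p := fun k : Fin d => (k:ℕ) < T.card)
      rw [filter_lt_card hT, Finset.card_univ, Fintype.card_fin] at this
      omega
    calc ∏ k ∈ Finset.univ.filter (fun k : Fin d => ¬ (k:ℕ) < T.card), y (aT d T k)
        = ∏ _k ∈ Finset.univ.filter (fun k : Fin d => ¬ (k:ℕ) < T.card), y 0 := by
          refine Finset.prod_congr rfl (fun k hk => ?_)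
          rw [Finset.mem_filter] at hk
          rw [aT, dif_neg hk.2]
      _ = y 0 ^ (d - T.card) := by rw [Finset.prod_const, hc]
  have h2 : ∏ k ∈ Finset.univ.filter (fun k : Fin d => (k:ℕ) < T.card), y (aT d T k)
      = ∏ i ∈ T, y i.succ := by
    refine Finset.prod_bij (fun k hk => T.orderEmbOfFin rfl ⟨k, (Finset.mem_filter.mp hk).2⟩)
      ?_ ?_ ?_ ?_
    · intro k hk; exact Finset.orderEmbOfFin_mem T rfl _
    · intro k₁ hk₁ k₂ hk₂ h
      have := (T.orderEmbOfFin rfl).injective h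
      simpa [Fin.ext_iff] using congrArg Fin.val this
    · intro i hi
      have : i ∈ Set.range (T.orderEmbOfFin rfl) := by
        rw [Finset.range_orderEmbOfFin]; exact hi
      obtain ⟨j, hj⟩ := this
      refine ⟨⟨(j : ℕ), lt_of_lt_of_le j.2 hT⟩, ?_, ?_⟩
      · simp only [Finset.mem_filter, Finset.mem_univ, true_and]; exact j.2
      · simpa using hj
    · intro k hk
      rw [aT, dif_pos (Finset.mem_filter.mp hk).2]
  rw [h1, h2, mul_comm]

noncomputable def ptMap (d n : ℕ) (c : Finset (Fin n) → ℝ) :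
    MultilinearMap ℝ (fun _ : Fin d => (Fin (n+1) → ℝ)) ℝ :=
  ((d.factorial : ℝ)⁻¹) • ∑ T ∈ Finset.univ.filter (fun T : Finset (Fin n) => T.card ≤ d),
    c T • ∑ τ : Equiv.Perm (Fin d), monoMap d n (aT d T ∘ τ)

lemma ptMap_apply (d n : ℕ) (c : Finset (Fin n) → ℝ) (z : Fin d → (Fin (n+1) → ℝ)) :
    ptMap d n c z = (d.factorial : ℝ)⁻¹ *
      ∑ T ∈ Finset.univ.filter (fun T : Finset (Fin n) => T.card ≤ d),
        c T * ∑ τ : Equiv.Perm (Fin d), ∏ j, z j (aT d T (τ j)) := by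
  simp [ptMap, Function.comp, smul_eq_mul]

lemma ptMap_diag (d n : ℕ) (c : Finset (Fin n) → ℝ) (y : Fin (n+1) → ℝ) :
    ptMap d n c (fun _ => y) =
      ∑ T ∈ Finset.univ.filter (fun T : Finset (Fin n) => T.card ≤ d),
        c T * (y 0 ^ (d - T.card) * ∏ i ∈ T, y i.succ) := by
  rw [ptMap_apply, Finset.mul_sum]
  refine Finset.sum_congr rfl (fun T hT => ?_)
  have hTc : T.card ≤ d := (Finset.mem_filter.mp hT).2
  have h1 : ∀ τ : Equiv.Perm (Fin d), ∏ j, y (aT d T (τ j))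
      = y 0 ^ (d - T.card) * ∏ i ∈ T, y i.succ := by
    intro τ
    rw [← prod_aT T hTc y]
    exact Equiv.prod_comp τ (fun k => y (aT d T k))
  rw [Finset.sum_congr rfl (fun τ _ => h1 τ), Finset.sum_const, Finset.card_univ]
  have hfac : (Fintype.card (Equiv.Perm (Fin d)) : ℝ) = (d.factorial : ℝ) := by
    rw [Fintype.card_perm, Fintype.card_fin]
  have hne : (d.factorial : ℝ) ≠ 0 := Nat.cast_ne_zero.mpr (Nat.factorial_ne_zero d)
  rw [nsmul_eq_mul, hfac]
  field_simp

lemma ptMap_symm (d n : ℕ) (c : Finset (Fin n) → ℝ) (σ : Equiv.Perm (Fin d))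
    (z : Fin d → (Fin (n+1) → ℝ)) :
    ptMap d n c (fun k => z (σ k)) = ptMap d n c z := by
  rw [ptMap_apply, ptMap_apply]
  congr 1
  refine Finset.sum_congr rfl (fun T hT => ?_)
  congr 1
  have key : ∀ τ : Equiv.Perm (Fin d), ∏ j, z (σ j) (aT d T (τ j))
      = ∏ j, z j (aT d T ((τ * σ⁻¹) j)) := by
    intro τ
    have := Equiv.prod_comp σ (fun j => z j (aT d T (τ (σ⁻¹ j))))
    simp only [Equiv.Perm.coe_inv, Equiv.symm_apply_apply] at this
    rw [this]
    refine Finset.prod_congr rfl (fun j _ => ?_)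
    simp [Equiv.Perm.mul_apply]
  rw [Finset.sum_congr rfl (fun τ _ => key τ)]
  exact Fintype.sum_equiv (Equiv.mulRight σ⁻¹) _ _ (fun τ => rfl)

lemma sum_powerset_neg_one_real {α : Type*} [DecidableEq α] (x : Finset α) :
    (∑ m ∈ x.powerset, (-1 : ℝ) ^ m.card) = if x = ∅ then 1 else 0 := by
  have h := Finset.sum_powerset_neg_one_pow_card (x := x)
  have := congrArg (fun t : ℤ => (t : ℝ)) h
  push_cast at this
  simpa using this

lemma inclusion_exclusion_step {d : ℕ} (R : Finset (Fin d)) :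
    ∑ S ∈ (Finset.univ : Finset (Fin d)).powerset,
        (if R ⊆ S then (-1:ℝ)^(d - S.card) else 0)
      = if R = Finset.univ then 1 else 0 := by
  classical
  rw [Finset.sum_ite, Finset.sum_const_zero, add_zero]
  have hbij : ∑ S ∈ ((Finset.univ : Finset (Fin d)).powerset.filter (fun S => R ⊆ S)),
      (-1:ℝ)^(d - S.card)
      = ∑ S' ∈ Rᶜ.powerset, (-1:ℝ)^(d - (S'.card + R.card)) := by
    refine Finset.sum_bij' (fun S _ => S \ R) (fun S' _ => S' ∪ R) ?_ ?_ ?_ ?_ ?_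
    · intro S hS
      rw [Finset.mem_filter] at hS
      rw [Finset.mem_powerset]
      intro x hx
      rw [Finset.mem_sdiff] at hx
      simpa [Finset.mem_compl] using hx.2
    · intro S' hS'
      rw [Finset.mem_powerset] at hS'
      rw [Finset.mem_filter, Finset.mem_powerset]
      exact ⟨Finset.subset_univ _, Finset.subset_union_right⟩
    · intro S hS
      rw [Finset.mem_filter] at hS
      exact Finset.sdiff_union_of_subset hS.2
    · intro S' hS'
      rw [Finset.mem_powerset] at hS'
      refine Finset.union_sdiff_cancel_right ?_
      exact Finset.disjoint_left.mpr (fun x hx => by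
        have := hS' hx; rw [Finset.mem_compl] at this; exact this)
    · intro S hS
      rw [Finset.mem_filter] at hS
      congr 2
      rw [Finset.card_sdiff_of_subset hS.2]
      have h1 : R.card ≤ S.card := Finset.card_le_card hS.2
      have h2 : S.card ≤ d := by
        simpa using Finset.card_le_card (Finset.subset_univ S)
      omega
  rw [hbij]
  have hm : ∀ S' ∈ Rᶜ.powerset, (-1:ℝ)^(d - (S'.card + R.card))
      = (-1:ℝ)^(Rᶜ.card) * (-1:ℝ)^(S'.card) := by
    intro S' hS'
    rw [Finset.mem_powerset] at hS'
    have h1 : S'.card ≤ Rᶜ.card := Finset.card_le_card hS'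
    have h2 : Rᶜ.card = d - R.card := by
      rw [Finset.card_compl, Fintype.card_fin]
    have h3 : R.card ≤ d := by
      simpa using Finset.card_le_card (Finset.subset_univ R)
    have h4 : d - (S'.card + R.card) + 2 * S'.card = Rᶜ.card + S'.card := by omega
    calc (-1:ℝ)^(d - (S'.card + R.card))
        = (-1:ℝ)^(d - (S'.card + R.card)) * ((-1:ℝ)^2)^(S'.card) := by norm_num
      _ = (-1:ℝ)^(d - (S'.card + R.card) + 2 * S'.card) := by
          rw [← pow_mul, ← pow_add]
      _ = (-1:ℝ)^(Rᶜ.card + S'.card) := by rw [h4]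
      _ = _ := by rw [pow_add]
  rw [Finset.sum_congr rfl hm, ← Finset.mul_sum, sum_powerset_neg_one_real]
  by_cases hR : R = Finset.univ
  · simp [hR]
  · have : Rᶜ ≠ ∅ := by
      intro h
      apply hR
      have := Finset.compl_empty (α := Fin d)
      rw [← compl_compl R, h, Finset.compl_empty]
    simp [hR, this]

lemma polarization {d : ℕ} {V : Type*} [AddCommGroup V] [Module ℝ V]
    (f : MultilinearMap ℝ (fun _ : Fin d => V) ℝ) (z : Fin d → V) :
    ∑ S ∈ (Finset.univ : Finset (Fin d)).powerset,
        (-1:ℝ)^(d - S.card) * f (fun _ => ∑ j ∈ S, z j)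
      = ∑ σ : Equiv.Perm (Fin d), f (fun k => z (σ k)) := by
  classical
  have hA : ∀ S : Finset (Fin d), f (fun _ => ∑ j ∈ S, z j)
      = ∑ r ∈ Fintype.piFinset (fun _ : Fin d => S), f (fun k => z (r k)) := by
    intro S
    exact f.map_sum_finset (A := fun _ => S) (g := fun _ j => z j)
  have hpi : ∀ S : Finset (Fin d), Fintype.piFinset (fun _ : Fin d => S)
      = Finset.univ.filter (fun r : Fin d → Fin d => Finset.image r Finset.univ ⊆ S) := by
    intro S; ext r
    simp [Fintype.mem_piFinset, Finset.image_subset_iff]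
  calc ∑ S ∈ (Finset.univ : Finset (Fin d)).powerset,
        (-1:ℝ)^(d - S.card) * f (fun _ => ∑ j ∈ S, z j)
      = ∑ S ∈ (Finset.univ : Finset (Fin d)).powerset, ∑ r ∈ (Finset.univ : Finset (Fin d → Fin d)),
          (if Finset.image r Finset.univ ⊆ S then (-1:ℝ)^(d - S.card) else 0) * f (fun k => z (r k)) := by
        refine Finset.sum_congr rfl (fun S _ => ?_)
        rw [hA S, hpi S, Finset.mul_sum, Finset.sum_filter]
        refine Finset.sum_congr rfl (fun r _ => ?_)
        by_cases h : Finset.image r Finset.univ ⊆ S <;> simp [h]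
    _ = ∑ r ∈ (Finset.univ : Finset (Fin d → Fin d)),
          (∑ S ∈ (Finset.univ : Finset (Fin d)).powerset,
            (if Finset.image r Finset.univ ⊆ S then (-1:ℝ)^(d - S.card) else 0)) * f (fun k => z (r k)) := by
        rw [Finset.sum_comm]
        refine Finset.sum_congr rfl (fun r _ => ?_)
        rw [Finset.sum_mul]
    _ = ∑ r ∈ (Finset.univ : Finset (Fin d → Fin d)),
          (if Finset.image r Finset.univ = Finset.univ then 1 else 0) * f (fun k => z (r k)) := by
        refine Finset.sum_congr rfl (fun r _ => ?_)
        rw [inclusion_exclusion_step]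
    _ = ∑ r ∈ (Finset.univ : Finset (Fin d → Fin d)).filter
          (fun r => Finset.image r Finset.univ = Finset.univ), f (fun k => z (r k)) := by
        rw [Finset.sum_filter]
        refine Finset.sum_congr rfl (fun r _ => ?_)
        by_cases h : Finset.image r Finset.univ = Finset.univ <;> simp [h]
    _ = ∑ σ : Equiv.Perm (Fin d), f (fun k => z (σ k)) := by
        refine (Finset.sum_bij (fun (σ : Equiv.Perm (Fin d)) _ => ⇑σ) ?_ ?_ ?_ ?_).symm
        · intro σ _
          simp only [Finset.mem_filter, Finset.mem_univ, true_and]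
          ext y
          simp only [Finset.mem_image, Finset.mem_univ, true_and, iff_true]
          exact ⟨σ⁻¹ y, σ.apply_symm_apply y⟩
        · intro σ₁ _ σ₂ _ h
          exact Equiv.coe_fn_injective h
        · intro r hr
          rw [Finset.mem_filter] at hr
          have hsurj : Function.Surjective r := by
            intro y
            have : y ∈ Finset.image r Finset.univ := by rw [hr.2]; exact Finset.mem_univ y
            obtain ⟨x, _, hx⟩ := Finset.mem_image.mp this
            exact ⟨x, hx⟩
          have hbij : Function.Bijective r := Finite.surjective_iff_bijective.mp hsurj
          exact ⟨Equiv.ofBijective r hbij, Finset.mem_univ _, rfl⟩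
        · intro σ _
          rfl

lemma multilinear_ext_bound {n d : ℕ} (c : Finset (Fin n) → ℝ)
    (hbound : ∀ ε : Fin n → ℝ, (∀ i, ε i = 1 ∨ ε i = -1) →
      |∑ T ∈ Finset.univ.filter (fun T : Finset (Fin n) => T.card ≤ d), c T * ∏ i ∈ T, ε i| ≤ 1)
    (u : Fin n → ℝ) (hu : ∀ i, |u i| ≤ 1) :
    |∑ T ∈ Finset.univ.filter (fun T : Finset (Fin n) => T.card ≤ d), c T * ∏ i ∈ T, u i| ≤ 1 := by
  classical
  set E := Fintype.piFinset (fun _ : Fin n => ({1, -1} : Finset ℝ)) with hE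
  set w : (Fin n → ℝ) → ℝ := fun ε => ∏ i, (1 + ε i * u i)/2 with hw
  have hmem : ∀ ε ∈ E, ∀ i, ε i = 1 ∨ ε i = -1 := by
    intro ε hε i
    have := (Fintype.mem_piFinset.mp hε) i
    simpa using this
  have key2 : ∀ T : Finset (Fin n), ∑ ε ∈ E, w ε * ∏ i ∈ T, ε i = ∏ i ∈ T, u i := by
    intro T
    have step1 : ∀ ε : Fin n → ℝ, w ε * ∏ i ∈ T, ε i
        = ∏ i, ((1 + ε i * u i)/2 * (if i ∈ T then ε i else 1)) := by
      intro ε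
      rw [Finset.prod_mul_distrib, hw]
      congr 1
      rw [Finset.prod_ite_mem, Finset.univ_inter]
    rw [Finset.sum_congr rfl (fun ε _ => step1 ε), hE, ← Finset.prod_univ_sum (fun _ : Fin n => ({1, -1} : Finset ℝ))
      (fun i t => (1 + t * u i)/2 * (if i ∈ T then t else 1))]
    have step2 : ∀ i : Fin n, (∑ t ∈ ({1, -1} : Finset ℝ), (1 + t * u i)/2 * (if i ∈ T then t else 1))
        = if i ∈ T then u i else 1 := by
      intro i
      rw [Finset.sum_insert (by norm_num), Finset.sum_singleton]
      by_cases h : i ∈ T <;> simp [h] <;> ring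
    rw [Finset.prod_congr rfl (fun i _ => step2 i)]
    rw [Finset.prod_ite_mem, Finset.univ_inter]
  have key1 : ∑ ε ∈ E, w ε = 1 := by
    have := key2 ∅
    simpa using this
  have hwnn : ∀ ε ∈ E, 0 ≤ w ε := by
    intro ε hε
    refine Finset.prod_nonneg (fun i _ => ?_)
    have h1 : |ε i * u i| ≤ 1 := by
      rcases hmem ε hε i with h | h <;> simp [h, abs_neg, hu i]
    have := (abs_le.mp h1).1
    linarith
  have hrep : ∑ T ∈ Finset.univ.filter (fun T : Finset (Fin n) => T.card ≤ d), c T * ∏ i ∈ T, u i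
      = ∑ ε ∈ E, w ε * (∑ T ∈ Finset.univ.filter (fun T : Finset (Fin n) => T.card ≤ d),
          c T * ∏ i ∈ T, ε i) := by
    calc ∑ T ∈ Finset.univ.filter (fun T : Finset (Fin n) => T.card ≤ d), c T * ∏ i ∈ T, u i
        = ∑ T ∈ Finset.univ.filter (fun T : Finset (Fin n) => T.card ≤ d),
            ∑ ε ∈ E, c T * (w ε * ∏ i ∈ T, ε i) := by
          refine Finset.sum_congr rfl (fun T _ => ?_)
          rw [← Finset.mul_sum, key2 T]
      _ = ∑ ε ∈ E, ∑ T ∈ Finset.univ.filter (fun T : Finset (Fin n) => T.card ≤ d),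
            c T * (w ε * ∏ i ∈ T, ε i) := Finset.sum_comm
      _ = ∑ ε ∈ E, w ε * (∑ T ∈ Finset.univ.filter (fun T : Finset (Fin n) => T.card ≤ d),
            c T * ∏ i ∈ T, ε i) := by
          refine Finset.sum_congr rfl (fun ε _ => ?_)
          rw [Finset.mul_sum]
          exact Finset.sum_congr rfl (fun T _ => by ring)
  rw [hrep]
  calc |∑ ε ∈ E, w ε * (∑ T ∈ Finset.univ.filter (fun T : Finset (Fin n) => T.card ≤ d),
          c T * ∏ i ∈ T, ε i)|
      ≤ ∑ ε ∈ E, |w ε * (∑ T ∈ Finset.univ.filter (fun T : Finset (Fin n) => T.card ≤ d),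
          c T * ∏ i ∈ T, ε i)| := Finset.abs_sum_le_sum_abs _ _
    _ ≤ ∑ ε ∈ E, w ε := by
        refine Finset.sum_le_sum (fun ε hε => ?_)
        rw [abs_mul, abs_of_nonneg (hwnn ε hε)]
        calc w ε * |∑ T ∈ Finset.univ.filter (fun T : Finset (Fin n) => T.card ≤ d),
              c T * ∏ i ∈ T, ε i| ≤ w ε * 1 :=
              mul_le_mul_of_nonneg_left (hbound ε (hmem ε hε)) (hwnn ε hε)
          _ = w ε := mul_one _
    _ = 1 := key1

lemma sum_powerset_card_pow (d : ℕ) (hd : 1 ≤ d) :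
    ∑ S ∈ (Finset.univ : Finset (Fin d)).powerset, ((S.card : ℝ))^d
      = ∑ s ∈ Finset.Icc 1 d, (d.choose s : ℝ) * (s : ℝ)^d := by
  classical
  rw [Finset.powerset_card_disjiUnion]; erw [Finset.sum_disjiUnion]
  have hcard : (Finset.univ : Finset (Fin d)).card = d := by
    rw [Finset.card_univ, Fintype.card_fin]
  have hinner : ∀ s : ℕ, ∑ S ∈ Finset.powersetCard s (Finset.univ : Finset (Fin d)),
      ((S.card : ℝ))^d = (d.choose s : ℝ) * (s:ℝ)^d := by
    intro s
    have : ∀ S ∈ Finset.powersetCard s (Finset.univ : Finset (Fin d)),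
        ((S.card : ℝ))^d = (s:ℝ)^d := by
      intro S hS
      rw [(Finset.mem_powersetCard.mp hS).2]
    rw [Finset.sum_congr rfl this, Finset.sum_const, Finset.card_powersetCard, hcard,
      nsmul_eq_mul]
  rw [Finset.sum_congr rfl (fun s _ => hinner s)]
  have hrange : Finset.range ((Finset.univ : Finset (Fin d)).card + 1)
      = insert 0 (Finset.Icc 1 d) := by
    ext s
    simp only [Finset.mem_range, Finset.mem_insert, Finset.mem_Icc, hcard]
    omega
  rw [hrange, Finset.sum_insert (by simp)]
  have : ((0:ℕ):ℝ)^d = 0 := by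
    rw [Nat.cast_zero, zero_pow (by omega)]
  rw [this, mul_zero, zero_add]

/-- Any bounded multilinear polynomial of degree at most `d` on `{-1,1}ⁿ`
extends to a `d`-multilinear form `p̃` on `(ℝ^{n+1})^d` with `p̃(x̃,…,x̃) = p(x)` and
`|p̃| ≤ B(d)` on `{-1,1}`-valued inputs. -/
theorem degree_d_to_block_multilinear (d n : ℕ) (hd : 1 ≤ d) (hn : 1 ≤ n)
    (c : Finset (Fin n) → ℝ) (p : (Fin n → ℝ) → ℝ)
    (hp : ∀ x : Fin n → ℝ,
      p x = ∑ T ∈ Finset.univ.filter (fun T : Finset (Fin n) => T.card ≤ d),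
        c T * ∏ i ∈ T, x i)
    (hbound : ∀ x : Fin n → ℝ, (∀ i, x i = 1 ∨ x i = -1) → |p x| ≤ 1) :
    ∃ pt : MultilinearMap ℝ (fun _ : Fin d => (Fin (n + 1) → ℝ)) ℝ,
      (∀ x : Fin n → ℝ, pt (fun _ => Fin.cons 1 x) = p x) ∧
      (∀ z : Fin d → (Fin (n + 1) → ℝ),
        (∀ j i, z j i = 1 ∨ z j i = -1) → |pt z| ≤ Bconst d) := by
  classical
  have hbound' : ∀ ε : Fin n → ℝ, (∀ i, ε i = 1 ∨ ε i = -1) →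
      |∑ T ∈ Finset.univ.filter (fun T : Finset (Fin n) => T.card ≤ d), c T * ∏ i ∈ T, ε i| ≤ 1 := by
    intro ε hε
    rw [← hp ε]
    exact hbound ε hε
  refine ⟨ptMap d n c, ?_, ?_⟩
  · intro x
    rw [ptMap_diag, hp x]
    refine Finset.sum_congr rfl (fun T hT => ?_)
    simp [Fin.cons_zero, Fin.cons_succ, one_pow]
  · intro z hz
    set z' : Fin d → Fin (n+1) → ℝ := fun j => (z j 0) • (z j) with hz'def
    have hz'0 : ∀ j, z' j 0 = 1 := by
      intro j
      rcases hz j 0 with h | h <;> simp [hz'def, h]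
    have hz'pm : ∀ j i, z' j i = 1 ∨ z' j i = -1 := by
      intro j i
      rcases hz j 0 with h0 | h0 <;> rcases hz j i with h | h <;>
        simp [hz'def, h0, h]
    have habs : |ptMap d n c z'| = |ptMap d n c z| := by
      have h1 : ptMap d n c z' = (∏ j, z j 0) • ptMap d n c z := by
        rw [hz'def]
        exact (ptMap d n c).map_smul_univ (fun j => z j 0) z
      rw [h1, smul_eq_mul, abs_mul]
      have : |∏ j, z j 0| = 1 := by
        rw [Finset.abs_prod]
        have habs1 : ∀ j ∈ (Finset.univ : Finset (Fin d)), |z j 0| = (1:ℝ) := by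
          intro j _
          rcases hz j 0 with h | h <;> simp [h]
        rw [Finset.prod_congr rfl habs1]
        simp
      rw [this, one_mul]
    -- bound each polarization term
    have hq : ∀ S : Finset (Fin d),
        |ptMap d n c (fun _ => ∑ j ∈ S, z' j)| ≤ ((S.card : ℝ))^d := by
      intro S
      set w : Fin (n+1) → ℝ := ∑ j ∈ S, z' j with hwdef
      have hw : ∀ i : Fin (n+1), w i = ∑ j ∈ S, z' j i := by
        intro i
        rw [hwdef, Finset.sum_apply]
      have hw0 : w 0 = (S.card : ℝ) := by
        rw [hw 0, Finset.sum_congr rfl (fun j _ => hz'0 j), Finset.sum_const, nsmul_eq_mul,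
          mul_one]
      have hwb : ∀ i : Fin n, |w i.succ| ≤ (S.card : ℝ) := by
        intro i
        rw [hw i.succ]
        calc |∑ j ∈ S, z' j i.succ| ≤ ∑ j ∈ S, |z' j i.succ| :=
              Finset.abs_sum_le_sum_abs _ _
          _ = ∑ _j ∈ S, (1:ℝ) := by
              refine Finset.sum_congr rfl (fun j _ => ?_)
              rcases hz'pm j i.succ with h | h <;> simp [h]
          _ = (S.card : ℝ) := by rw [Finset.sum_const, nsmul_eq_mul, mul_one]
      rw [ptMap_diag]
      rcases Nat.eq_zero_or_pos S.card with hs0 | hspos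
      · have hzero : ∀ T ∈ Finset.univ.filter (fun T : Finset (Fin n) => T.card ≤ d),
            c T * (w 0 ^ (d - T.card) * ∏ i ∈ T, w i.succ) = 0 := by
          intro T hT
          rcases Finset.eq_empty_or_nonempty T with rfl | ⟨i, hi⟩
          · rw [hw0, hs0]
            simp only [Finset.card_empty, Nat.sub_zero, Nat.cast_zero]
            rw [zero_pow (by omega)]
            ring
          · have hwi : w i.succ = 0 := by
              have := hwb i
              rw [hs0] at this
              simpa using abs_nonpos_iff.mp (by simpa using this)
            rw [Finset.prod_eq_zero hi hwi]
            ring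
        rw [Finset.sum_congr rfl hzero, Finset.sum_const_zero, hs0]
        simp
      · set s : ℝ := (S.card : ℝ) with hsdef
        have hsne : s ≠ 0 := by
          rw [hsdef]
          exact_mod_cast Nat.pos_iff_ne_zero.mp hspos
        have hspos' : (0:ℝ) < s := by
          rw [hsdef]
          exact_mod_cast hspos
        set u : Fin n → ℝ := fun i => w i.succ / s with hudef
        have hu : ∀ i, |u i| ≤ 1 := by
          intro i
          rw [hudef]
          rw [abs_div, abs_of_pos hspos', div_le_one hspos']
          exact hwb i
        have hwsucc : ∀ i : Fin n, w i.succ = s * u i := by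
          intro i
          rw [hudef]
          field_simp
        have hterm : ∀ T ∈ Finset.univ.filter (fun T : Finset (Fin n) => T.card ≤ d),
            c T * (w 0 ^ (d - T.card) * ∏ i ∈ T, w i.succ)
            = s^d * (c T * ∏ i ∈ T, u i) := by
          intro T hT
          have hTc : T.card ≤ d := (Finset.mem_filter.mp hT).2
          rw [hw0, Finset.prod_congr rfl (fun i _ => hwsucc i),
            Finset.prod_mul_distrib, Finset.prod_const]
          rw [show s ^ (d - T.card) * (s ^ T.card * ∏ i ∈ T, u i)
              = s ^ (d - T.card + T.card) * ∏ i ∈ T, u i by rw [pow_add]; ring,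
            Nat.sub_add_cancel hTc]
          ring
        rw [Finset.sum_congr rfl hterm, ← Finset.mul_sum]
        rw [abs_mul, abs_pow, abs_of_pos hspos']
        calc s^d * |∑ T ∈ Finset.univ.filter (fun T : Finset (Fin n) => T.card ≤ d),
              c T * ∏ i ∈ T, u i| ≤ s^d * 1 := by
              refine mul_le_mul_of_nonneg_left ?_ (pow_nonneg hspos'.le d)
              exact multilinear_ext_bound c hbound' u hu
          _ = s^d := mul_one _
    -- polarization
    have hpol := polarization (ptMap d n c) z'
    have hsymm : ∑ σ : Equiv.Perm (Fin d), ptMap d n c (fun k => z' (σ k))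
        = (d.factorial : ℝ) * ptMap d n c z' := by
      rw [Finset.sum_congr rfl (fun σ _ => ptMap_symm d n c σ z'), Finset.sum_const,
        Finset.card_univ, Fintype.card_perm, Fintype.card_fin, nsmul_eq_mul]
    have hfacpos : (0:ℝ) < (d.factorial : ℝ) := by
      exact_mod_cast Nat.factorial_pos d
    have hkey : ptMap d n c z' = (d.factorial : ℝ)⁻¹ *
        ∑ S ∈ (Finset.univ : Finset (Fin d)).powerset,
          (-1:ℝ)^(d - S.card) * ptMap d n c (fun _ => ∑ j ∈ S, z' j) := by
      rw [hpol, hsymm]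
      field_simp
    rw [← habs, hkey, abs_mul, abs_inv, abs_of_pos hfacpos]
    have hstep : |∑ S ∈ (Finset.univ : Finset (Fin d)).powerset,
        (-1:ℝ)^(d - S.card) * ptMap d n c (fun _ => ∑ j ∈ S, z' j)|
        ≤ ∑ s ∈ Finset.Icc 1 d, (d.choose s : ℝ) * (s : ℝ)^d := by
      calc |∑ S ∈ (Finset.univ : Finset (Fin d)).powerset,
          (-1:ℝ)^(d - S.card) * ptMap d n c (fun _ => ∑ j ∈ S, z' j)|
          ≤ ∑ S ∈ (Finset.univ : Finset (Fin d)).powerset,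
            |(-1:ℝ)^(d - S.card) * ptMap d n c (fun _ => ∑ j ∈ S, z' j)| :=
            Finset.abs_sum_le_sum_abs _ _
        _ ≤ ∑ S ∈ (Finset.univ : Finset (Fin d)).powerset, ((S.card : ℝ))^d := by
            refine Finset.sum_le_sum (fun S _ => ?_)
            rw [abs_mul, abs_pow, abs_neg, abs_one, one_pow, one_mul]
            exact hq S
        _ = ∑ s ∈ Finset.Icc 1 d, (d.choose s : ℝ) * (s : ℝ)^d :=
            sum_powerset_card_pow d hd
    calc (d.factorial : ℝ)⁻¹ * |∑ S ∈ (Finset.univ : Finset (Fin d)).powerset,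
          (-1:ℝ)^(d - S.card) * ptMap d n c (fun _ => ∑ j ∈ S, z' j)|
        ≤ (d.factorial : ℝ)⁻¹ * ∑ s ∈ Finset.Icc 1 d, (d.choose s : ℝ) * (s : ℝ)^d :=
          mul_le_mul_of_nonneg_left hstep (by positivity)
      _ = Bconst d := by rw [Bconst, one_div]
end

section
/- Let n ≥ 1 and let p : ℝⁿ → ℝ be a multilinear polynomial of degree at most 2, i.e. p(x) = c₀ + Σ_i c_i x_i + Σ_{i<j} c_{ij} x_i x_j, such that |p(x)| ≤ 1 for every x ∈ {-1,1}ⁿ. Then there exists a real (n+1)×(n+1) matrix M such that x̃ᵀ M x̃ = p(x) for every x ∈ ℝⁿ, where x̃ := (1, x₁, …, xₙ) ∈ ℝ^{n+1}, and |yᵀ M z| ≤ 3 for all y, z ∈ {-1,1}^{n+1}. -/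
open scoped BigOperators

lemma sum_split_at {m : ℕ} (i : Fin m) (f : Fin m → ℝ) :
    ∑ j, f j = (∑ j ∈ Finset.Iio i, f j) + f i + ∑ j ∈ Finset.Ioi i, f j := by
  have h : (Finset.univ : Finset (Fin m)) = (Finset.Iio i) ∪ (Finset.Ici i) := by
    ext j; simp [lt_or_ge]
  have hd : Disjoint (Finset.Iio i) (Finset.Ici i) := by
    simp [Finset.disjoint_left]
  rw [h, Finset.sum_union hd, Finset.Ici_eq_cons_Ioi, Finset.sum_cons]; ring

lemma sum_Iio_swap {m : ℕ} (f : Fin m → Fin m → ℝ) :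
    ∑ i, ∑ j ∈ Finset.Iio i, f i j = ∑ i, ∑ j ∈ Finset.Ioi i, f j i := by
  exact Finset.sum_comm' (by intro x y; simp [and_comm])

lemma tri_sum {n : ℕ} (c2 : Fin n → Fin n → ℝ) (x : Fin n → ℝ) :
    ∑ i, ∑ j, x i * (if i < j then c2 i j / 2 else if j < i then c2 j i / 2 else 0) * x j
      = ∑ i, ∑ j ∈ Finset.Ioi i, c2 i j * x i * x j := by
  set d : Fin n → Fin n → ℝ :=
    fun i j => if i < j then c2 i j / 2 else if j < i then c2 j i / 2 else 0 with hd
  calc ∑ i, ∑ j, x i * d i j * x j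
      = ∑ i, ((∑ j ∈ Finset.Iio i, x i * d i j * x j) + x i * d i i * x i
          + ∑ j ∈ Finset.Ioi i, x i * d i j * x j) :=
        Finset.sum_congr rfl fun i _ => sum_split_at i _
    _ = (∑ i, ∑ j ∈ Finset.Iio i, x i * d i j * x j)
          + ∑ i, ∑ j ∈ Finset.Ioi i, x i * d i j * x j := by
        rw [Finset.sum_add_distrib, Finset.sum_add_distrib]
        have : ∀ i : Fin n, x i * d i i * x i = 0 := by
          intro i; simp [hd]
        simp [this]
    _ = (∑ i, ∑ j ∈ Finset.Ioi i, x j * d j i * x i)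
          + ∑ i, ∑ j ∈ Finset.Ioi i, x i * d i j * x j := by
        rw [sum_Iio_swap]
    _ = ∑ i, ∑ j ∈ Finset.Ioi i, c2 i j * x i * x j := by
        rw [← Finset.sum_add_distrib]
        refine Finset.sum_congr rfl fun i _ => ?_
        rw [← Finset.sum_add_distrib]
        refine Finset.sum_congr rfl fun j hj => ?_
        have hij : i < j := Finset.mem_Ioi.mp hj
        simp only [hd, if_pos hij, if_neg (asymm hij)]
        ring

noncomputable def Mmat (n : ℕ) (c0 : ℝ) (c1 : Fin n → ℝ) (c2 : Fin n → Fin n → ℝ) :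
    Matrix (Fin (n + 1)) (Fin (n + 1)) ℝ :=
  Fin.cons (Fin.cons c0 (fun j => c1 j / 2))
    (fun i => Fin.cons (c1 i / 2)
      (fun j => if i < j then c2 i j / 2 else if j < i then c2 j i / 2 else 0))

lemma Mmat_symm (n : ℕ) (c0 : ℝ) (c1 : Fin n → ℝ) (c2 : Fin n → Fin n → ℝ)
    (i j : Fin (n + 1)) : Mmat n c0 c1 c2 i j = Mmat n c0 c1 c2 j i := by
  induction i using Fin.cases with
  | zero =>
    induction j using Fin.cases with
    | zero => rfl
    | succ j => simp [Mmat]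
  | succ i =>
    induction j using Fin.cases with
    | zero => simp [Mmat]
    | succ j =>
      simp only [Mmat, Fin.cons_succ]
      rcases lt_trichotomy i j with h | h | h
      · rw [if_pos h, if_neg (asymm h), if_pos h]
      · subst h; simp
      · rw [if_neg (asymm h), if_pos h, if_pos h]

lemma Mmat_Q (n : ℕ) (c0 : ℝ) (c1 : Fin n → ℝ) (c2 : Fin n → Fin n → ℝ)
    (w : Fin (n + 1) → ℝ) :
    (∑ i, ∑ j, w i * Mmat n c0 c1 c2 i j * w j)
      = c0 * (w 0) ^ 2 + (w 0) * (∑ i, c1 i * w i.succ)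
        + ∑ i, ∑ j ∈ Finset.Ioi i, c2 i j * w i.succ * w j.succ := by
  simp only [Fin.sum_univ_succ, Mmat, Fin.cons_zero, Fin.cons_succ]
  rw [Finset.sum_add_distrib, tri_sum c2 (fun i => w i.succ)]
  have hlin : (∑ x : Fin n, w 0 * (c1 x / 2) * w x.succ)
      + ∑ x : Fin n, w x.succ * (c1 x / 2) * w 0
      = w 0 * ∑ i, c1 i * w i.succ := by
    rw [← Finset.sum_add_distrib, Finset.mul_sum]
    exact Finset.sum_congr rfl fun i _ => by ring
  have hsq : w 0 * c0 * w 0 = c0 * (w 0) ^ 2 := by ring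
  linarith

lemma poly_midpoint {n : ℕ} (c0 : ℝ) (c1 : Fin n → ℝ) (c2 : Fin n → Fin n → ℝ)
    (p : (Fin n → ℝ) → ℝ)
    (hp : ∀ x : Fin n → ℝ,
      p x = c0 + ∑ i, c1 i * x i + ∑ i, ∑ j ∈ Finset.Ioi i, c2 i j * x i * x j)
    (x : Fin n → ℝ) (k : Fin n) :
    p (Function.update x k 1) + p (Function.update x k (-1)) = 2 * p (Function.update x k 0) := by
  rw [hp, hp, hp]
  have h1 : (∑ i, c1 i * Function.update x k 1 i) + (∑ i, c1 i * Function.update x k (-1) i)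
      = 2 * ∑ i, c1 i * Function.update x k 0 i := by
    rw [← Finset.sum_add_distrib, Finset.mul_sum]
    refine Finset.sum_congr rfl fun i _ => ?_
    rcases eq_or_ne i k with h | h
    · subst h; simp
    · simp [Function.update_of_ne h]; ring
  have h2 : (∑ i, ∑ j ∈ Finset.Ioi i, c2 i j * Function.update x k 1 i * Function.update x k 1 j)
      + (∑ i, ∑ j ∈ Finset.Ioi i, c2 i j * Function.update x k (-1) i * Function.update x k (-1) j)
      = 2 * ∑ i, ∑ j ∈ Finset.Ioi i, c2 i j * Function.update x k 0 i * Function.update x k 0 j := by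
    rw [← Finset.sum_add_distrib, Finset.mul_sum]
    refine Finset.sum_congr rfl fun i _ => ?_
    rw [← Finset.sum_add_distrib, Finset.mul_sum]
    refine Finset.sum_congr rfl fun j hj => ?_
    have hij : i ≠ j := (Finset.mem_Ioi.mp hj).ne
    rcases eq_or_ne i k with h | h
    · subst h
      have hjk : j ≠ i := fun h' => hij h'.symm
      simp [Function.update_of_ne hjk]
    · rcases eq_or_ne j k with h' | h'
      · subst h'; simp [Function.update_of_ne h]
      · simp [Function.update_of_ne h, Function.update_of_ne h']; ring
  linarith

lemma cube_bound {n : ℕ} (c0 : ℝ) (c1 : Fin n → ℝ) (c2 : Fin n → Fin n → ℝ)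
    (p : (Fin n → ℝ) → ℝ)
    (hp : ∀ x : Fin n → ℝ,
      p x = c0 + ∑ i, c1 i * x i + ∑ i, ∑ j ∈ Finset.Ioi i, c2 i j * x i * x j)
    (hbound : ∀ x : Fin n → ℝ, (∀ i, x i = 1 ∨ x i = -1) → |p x| ≤ 1) :
    ∀ x : Fin n → ℝ, (∀ i, x i = 1 ∨ x i = -1 ∨ x i = 0) → |p x| ≤ 1 := by
  suffices h : ∀ m : ℕ, ∀ x : Fin n → ℝ, (∀ i, x i = 1 ∨ x i = -1 ∨ x i = 0) →
      (Finset.univ.filter (fun i => x i = 0)).card = m → |p x| ≤ 1 by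
    exact fun x hx => h _ x hx rfl
  intro m
  induction m with
  | zero =>
    intro x hx hc
    apply hbound
    intro i
    rcases hx i with h | h | h
    · exact Or.inl h
    · exact Or.inr h
    · exfalso
      have : i ∈ Finset.univ.filter (fun i => x i = 0) := by simp [h]
      rw [Finset.card_eq_zero.mp hc] at this
      exact absurd this (Finset.notMem_empty i)
  | succ m ih =>
    intro x hx hc
    obtain ⟨k, hk⟩ : ∃ k, x k = 0 := by
      have : (Finset.univ.filter (fun i => x i = 0)).Nonempty := by
        rw [← Finset.card_pos, hc]; omega
      obtain ⟨k, hkm⟩ := this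
      exact ⟨k, (Finset.mem_filter.mp hkm).2⟩
    have hfil : ∀ a : ℝ, a ≠ 0 →
        Finset.univ.filter (fun i => Function.update x k a i = 0)
          = (Finset.univ.filter (fun i => x i = 0)).erase k := by
      intro a ha; ext i
      rcases eq_or_ne i k with h | h
      · subst h; simp [ha]
      · simp [Function.update_of_ne h, h]
    have hcard : ∀ a : ℝ, a ≠ 0 →
        (Finset.univ.filter (fun i => Function.update x k a i = 0)).card = m := by
      intro a ha
      rw [hfil a ha, Finset.card_erase_of_mem (by simp [hk]), hc]
      omega
    have hent : ∀ a : ℝ, (a = 1 ∨ a = -1 ∨ a = 0) → ∀ i,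
        Function.update x k a i = 1 ∨ Function.update x k a i = -1
          ∨ Function.update x k a i = 0 := by
      intro a ha i
      rcases eq_or_ne i k with h | h
      · subst h; simpa using ha
      · rw [Function.update_of_ne h]; exact hx i
    have b1 := ih (Function.update x k 1) (hent 1 (by norm_num)) (hcard 1 one_ne_zero)
    have b2 := ih (Function.update x k (-1)) (hent (-1) (by norm_num)) (hcard (-1) (by norm_num))
    have key := poly_midpoint c0 c1 c2 p hp x k
    have hx0 : Function.update x k 0 = x := by
      funext i
      rcases eq_or_ne i k with h | h
      · subst h; simp [hk]
      · rw [Function.update_of_ne h]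
    rw [hx0] at key
    rw [abs_le] at b1 b2 ⊢
    constructor <;> linarith [b1.1, b1.2, b2.1, b2.2]

/-- A bounded multilinear polynomial of degree at most 2 on `{-1,1}ⁿ`
can be written as a quadratic form `x̃ᵀ M x̃` with `|yᵀ M z| ≤ 3` on `{-1,1}^{n+1}`. -/
theorem degree_two_to_bilinear (n : ℕ) (hn : 1 ≤ n)
    (c0 : ℝ) (c1 : Fin n → ℝ) (c2 : Fin n → Fin n → ℝ) (p : (Fin n → ℝ) → ℝ)
    (hp : ∀ x : Fin n → ℝ,
      p x = c0 + ∑ i, c1 i * x i + ∑ i, ∑ j ∈ Finset.Ioi i, c2 i j * x i * x j)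
    (hbound : ∀ x : Fin n → ℝ, (∀ i, x i = 1 ∨ x i = -1) → |p x| ≤ 1) :
    ∃ M : Matrix (Fin (n + 1)) (Fin (n + 1)) ℝ,
      (∀ x : Fin n → ℝ,
        (∑ i, ∑ j, (Fin.cons 1 x : Fin (n + 1) → ℝ) i * M i j * (Fin.cons 1 x : Fin (n + 1) → ℝ) j) = p x) ∧
      (∀ y z : Fin (n + 1) → ℝ, (∀ i, y i = 1 ∨ y i = -1) → (∀ i, z i = 1 ∨ z i = -1) →
        |∑ i, ∑ j, y i * M i j * z j| ≤ 3) := by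
  refine ⟨Mmat n c0 c1 c2, ?_, ?_⟩
  · intro x
    rw [Mmat_Q, hp x]
    simp only [Fin.cons_zero, Fin.cons_succ]
    ring
  · intro y z hy hz
    have cube := cube_bound c0 c1 c2 p hp hbound
    have hb1 : ∀ (t : ℝ) (x : Fin n → ℝ), (t = 1 ∨ t = -1) →
        (∀ i, x i = 1 ∨ x i = -1 ∨ x i = 0) →
        |c0 * t ^ 2 + t * (∑ i, c1 i * x i)
          + ∑ i, ∑ j ∈ Finset.Ioi i, c2 i j * x i * x j| ≤ 1 := by
      intro t x ht hx
      have ht2 : t ^ 2 = 1 := by rcases ht with h | h <;> rw [h] <;> norm_num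
      have hxe : ∀ i, t * x i = 1 ∨ t * x i = -1 ∨ t * x i = 0 := by
        intro i
        rcases ht with h | h <;> rcases hx i with h' | h' | h' <;> rw [h, h'] <;> norm_num
      have hcube := cube (fun i => t * x i) hxe
      have he : p (fun i => t * x i) = c0 * t ^ 2 + t * (∑ i, c1 i * x i)
          + ∑ i, ∑ j ∈ Finset.Ioi i, c2 i j * x i * x j := by
        rw [hp]
        have e1 : ∑ i, c1 i * (t * x i) = t * ∑ i, c1 i * x i := by
          rw [Finset.mul_sum]; exact Finset.sum_congr rfl fun i _ => by ring
        have e2 : ∑ i, ∑ j ∈ Finset.Ioi i, c2 i j * (t * x i) * (t * x j)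
            = ∑ i, ∑ j ∈ Finset.Ioi i, c2 i j * x i * x j := by
          refine Finset.sum_congr rfl fun i _ => Finset.sum_congr rfl fun j _ => ?_
          have h : c2 i j * (t * x i) * (t * x j) = t ^ 2 * (c2 i j * x i * x j) := by ring
          rw [h, ht2, one_mul]
        rw [e1, e2, ht2]
        ring
      rw [← he]; exact hcube
    have hb2 : ∀ (x : Fin n → ℝ), (∀ i, x i = 1 ∨ x i = -1 ∨ x i = 0) →
        |∑ i, ∑ j ∈ Finset.Ioi i, c2 i j * x i * x j| ≤ 2 := by
      intro x hx
      have h1 := cube x hx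
      have h2 := cube (fun i => -x i)
        (fun i => by rcases hx i with h | h | h <;> simp [h])
      have h0 := cube (fun _ => (0 : ℝ)) (fun i => by norm_num)
      have e0 : p (fun _ => (0 : ℝ)) = c0 := by rw [hp]; simp
      have e2 : p x + p (fun i => -x i)
          = 2 * c0 + 2 * ∑ i, ∑ j ∈ Finset.Ioi i, c2 i j * x i * x j := by
        rw [hp, hp]
        have l1 : ∑ i, c1 i * (-x i) = -∑ i, c1 i * x i := by
          simp [mul_neg]
        have l2 : ∑ i, ∑ j ∈ Finset.Ioi i, c2 i j * (-x i) * (-x j)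
            = ∑ i, ∑ j ∈ Finset.Ioi i, c2 i j * x i * x j := by
          refine Finset.sum_congr rfl fun i _ => Finset.sum_congr rfl fun j _ => ?_
          ring
        rw [l1, l2]; ring
      rw [e0] at h0
      rw [abs_le] at h1 h2 h0 ⊢
      constructor <;> linarith [h1.1, h1.2, h2.1, h2.2, h0.1, h0.2]
    set M := Mmat n c0 c1 c2 with hM
    set u : Fin (n + 1) → ℝ := fun k => (y k + z k) / 2 with hu
    set v : Fin (n + 1) → ℝ := fun k => (y k - z k) / 2 with hv
    have hswap : (∑ i, ∑ j, z i * M i j * y j) = ∑ i, ∑ j, y i * M i j * z j := by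
      rw [Finset.sum_comm]
      refine Finset.sum_congr rfl fun a _ => Finset.sum_congr rfl fun b _ => ?_
      rw [hM, Mmat_symm n c0 c1 c2 b a]; ring
    have hkey : (∑ i, ∑ j, u i * M i j * u j) - (∑ i, ∑ j, v i * M i j * v j)
        = ∑ i, ∑ j, y i * M i j * z j := by
      have t1 : (∑ i, ∑ j, u i * M i j * u j) - (∑ i, ∑ j, v i * M i j * v j)
          = ∑ i, ∑ j, (u i * M i j * u j - v i * M i j * v j) := by
        rw [← Finset.sum_sub_distrib]
        exact Finset.sum_congr rfl fun i _ => (Finset.sum_sub_distrib _ _).symm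
      rw [t1]
      calc ∑ i, ∑ j, (u i * M i j * u j - v i * M i j * v j)
          = ∑ i, ∑ j, (y i * M i j * z j / 2 + z i * M i j * y j / 2) := by
            refine Finset.sum_congr rfl fun i _ => Finset.sum_congr rfl fun j _ => ?_
            simp only [hu, hv]; ring
        _ = (∑ i, ∑ j, y i * M i j * z j / 2) + ∑ i, ∑ j, z i * M i j * y j / 2 := by
            rw [← Finset.sum_add_distrib]
            exact Finset.sum_congr rfl fun i _ => Finset.sum_add_distrib
        _ = (∑ i, ∑ j, y i * M i j * z j) / 2 + (∑ i, ∑ j, z i * M i j * y j) / 2 := by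
            simp only [← Finset.sum_div]
        _ = ∑ i, ∑ j, y i * M i j * z j := by rw [hswap]; ring
    rw [← hkey, hM, Mmat_Q n c0 c1 c2 u, Mmat_Q n c0 c1 c2 v]
    have hue : ∀ i : Fin n, u i.succ = 1 ∨ u i.succ = -1 ∨ u i.succ = 0 := by
      intro i
      rcases hy i.succ with h | h <;> rcases hz i.succ with h' | h' <;>
        simp only [hu, h, h'] <;> norm_num
    have hve : ∀ i : Fin n, v i.succ = 1 ∨ v i.succ = -1 ∨ v i.succ = 0 := by
      intro i
      rcases hy i.succ with h | h <;> rcases hz i.succ with h' | h' <;>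
        simp only [hv, h, h'] <;> norm_num
    have hu0v0 : (u 0 = 0 ∧ (v 0 = 1 ∨ v 0 = -1)) ∨ ((u 0 = 1 ∨ u 0 = -1) ∧ v 0 = 0) := by
      rcases hy 0 with h | h <;> rcases hz 0 with h' | h' <;>
        simp only [hu, hv, h, h'] <;> norm_num
    rcases hu0v0 with ⟨h1, h2⟩ | ⟨h1, h2⟩
    · have bu := hb2 (fun i => u i.succ) hue
      have bv := hb1 (v 0) (fun i => v i.succ) h2 hve
      have e : c0 * (u 0) ^ 2 + (u 0) * (∑ i, c1 i * u i.succ)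
          + ∑ i, ∑ j ∈ Finset.Ioi i, c2 i j * u i.succ * u j.succ
          = ∑ i, ∑ j ∈ Finset.Ioi i, c2 i j * u i.succ * u j.succ := by
        rw [h1]; ring
      rw [e]
      rw [abs_le] at bu bv ⊢
      constructor <;> linarith [bu.1, bu.2, bv.1, bv.2]
    · have bu := hb1 (u 0) (fun i => u i.succ) h1 hue
      have bv := hb2 (fun i => v i.succ) hve
      have e : c0 * (v 0) ^ 2 + (v 0) * (∑ i, c1 i * v i.succ)
          + ∑ i, ∑ j ∈ Finset.Ioi i, c2 i j * v i.succ * v j.succ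
          = ∑ i, ∑ j ∈ Finset.Ioi i, c2 i j * v i.succ * v j.succ := by
        rw [h2]; ring
      rw [e]
      rw [abs_le] at bu bv ⊢
      constructor <;> linarith [bu.1, bu.2, bv.1, bv.2]
end

section
/- Let d ≥ 1, n ≥ 1, X ⊆ {-1,1}ⁿ, f : X → {0,1}, and 0 ≤ ε < 1/2. Suppose there is a multilinear polynomial q : ℝⁿ → ℝ of degree at most d satisfying q(x) ∈ [0,1] for all x ∈ {-1,1}ⁿ and |q(x) − f(x)| ≤ ε for all x ∈ X. Let ε' := 1/2 − (1/2 − ε)/B(d), where B(d) := (1/d!)·Σ_{s=1}^{d} (d choose s)·s^d. Then there exists a d-multilinear form p̃ : (ℝ^{n+1})^d → ℝ such that |p̃(z⁽¹⁾, …, z⁽ᵈ⁾)| ≤ 1 for all z⁽¹⁾, …, z⁽ᵈ⁾ ∈ {-1,1}^{n+1}, and |p̃(x̃, …, x̃) − f(x)| ≤ ε' for every x ∈ X, where x̃ := (1, x₁, …, xₙ) ∈ ℝ^{n+1}. -/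
open scoped BigOperators

open Finset

section AAIKSaux

set_option linter.unnecessarySimpa false

variable {d n : ℕ}


variable {d n : ℕ}

noncomputable def coordOf (T : Finset (Fin n)) (d : ℕ) (t : Fin d) : Fin (n + 1) :=
  if h : (t : ℕ) < T.card then (((T.orderIsoOfFin rfl) ⟨t, h⟩ : {x // x ∈ T}) : Fin n).succ
  else 0

noncomputable def monoM (d n : ℕ) (κ : Fin d → Fin (n + 1)) :
    MultilinearMap ℝ (fun _ : Fin d => (Fin (n + 1) → ℝ)) ℝ :=
  (MultilinearMap.mkPiAlgebra ℝ (Fin d) ℝ).compLinearMap fun j => LinearMap.proj (κ j)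

lemma monoM_apply (κ : Fin d → Fin (n + 1)) (z : Fin d → (Fin (n + 1) → ℝ)) :
    monoM d n κ z = ∏ j, z j (κ j) := by
  simp [monoM]

lemma filter_lt_card_eq (T : Finset (Fin n)) (hT : T.card ≤ d) :
    Finset.univ.filter (fun t : Fin d => (t : ℕ) < T.card)
      = Finset.map (Fin.castLEEmb hT) Finset.univ := by
  ext t
  simp only [Finset.mem_filter, Finset.mem_univ, true_and, Finset.mem_map,
    Fin.castLEEmb_apply]
  constructor
  · intro h
    exact ⟨⟨(t : ℕ), h⟩, by ext; simp⟩
  · rintro ⟨y, rfl⟩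
    simpa using y.2

lemma prod_coordOf (T : Finset (Fin n)) (hT : T.card ≤ d) (w : Fin (n + 1) → ℝ) :
    ∏ t : Fin d, w (coordOf T d t) = (w 0) ^ (d - T.card) * ∏ i ∈ T, w i.succ := by
  classical
  rw [← Finset.prod_filter_mul_prod_filter_not Finset.univ (fun t : Fin d => (t : ℕ) < T.card)]
  rw [mul_comm]
  congr 1
  · -- not-part : constant w 0
    rw [Finset.prod_congr rfl (fun t ht => ?_), Finset.prod_const]
    · congr 1
      have h2 : (Finset.univ.filter (fun t : Fin d => ¬ ((t : ℕ) < T.card))).card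
          = d - (Finset.univ.filter (fun t : Fin d => (t : ℕ) < T.card)).card := by
        rw [Finset.filter_not, Finset.card_sdiff_of_subset (Finset.filter_subset _ _)]
        simp
      rw [h2, filter_lt_card_eq T hT]
      simp
    · simp only [Finset.mem_filter] at ht
      rw [coordOf, dif_neg ht.2]
  · -- filter part equals product over T
    rw [filter_lt_card_eq T hT, Finset.prod_map]
    have : ∀ y : Fin T.card, w (coordOf T d (Fin.castLEEmb hT y))
        = w ((((T.orderIsoOfFin rfl) y : {x // x ∈ T}) : Fin n)).succ := by
      intro y
      rw [coordOf, dif_pos (by simpa using y.2)]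
      congr 2
    rw [Finset.prod_congr rfl (fun y _ => this y)]
    rw [← Finset.prod_coe_sort T (fun i => w i.succ)]
    exact Equiv.prod_comp (T.orderIsoOfFin rfl).toEquiv (fun i : {x // x ∈ T} => w (i : Fin n).succ)



lemma sum_indicator_subset (R : Finset (Fin d)) :
    ∑ S : Finset (Fin d), (if R ⊆ S then ((-1 : ℝ)) ^ (d - S.card) else 0)
      = if R = Finset.univ then 1 else 0 := by
  classical
  rw [← Equiv.sum_comp (⟨compl, compl, compl_compl, compl_compl⟩ :
        Finset (Fin d) ≃ Finset (Fin d))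
      (fun S => if R ⊆ S then ((-1 : ℝ)) ^ (d - S.card) else 0)]
  simp only [Equiv.coe_fn_mk]
  have key : ∀ U : Finset (Fin d),
      (if R ⊆ Uᶜ then ((-1 : ℝ)) ^ (d - (Uᶜ : Finset (Fin d)).card) else 0)
        = (if U ∈ Rᶜ.powerset then ((-1 : ℝ)) ^ U.card else 0) := by
    intro U
    have h1 : R ⊆ Uᶜ ↔ U ⊆ Rᶜ := ⟨Finset.subset_compl_comm.mp, Finset.subset_compl_comm.mpr⟩
    have h2 : (Uᶜ : Finset (Fin d)).card = d - U.card := by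
      rw [Finset.card_compl]; simp
    have h3 : d - (d - U.card) = U.card :=
      Nat.sub_sub_self (le_trans (Finset.card_le_univ U) (by simp))
    rw [h2, h3]
    by_cases h : U ⊆ Rᶜ
    · rw [if_pos (h1.mpr h), if_pos (Finset.mem_powerset.mpr h)]
    · rw [if_neg (fun hh => h (h1.mp hh)), if_neg (fun hh => h (Finset.mem_powerset.mp hh))]
  rw [Finset.sum_congr rfl (fun U _ => key U)]
  rw [Finset.sum_ite_mem, Finset.univ_inter]
  have : (∑ m ∈ Rᶜ.powerset, ((-1 : ℝ)) ^ m.card)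
      = (((∑ m ∈ Rᶜ.powerset, ((-1 : ℤ)) ^ m.card) : ℤ) : ℝ) := by
    push_cast
    rfl
  rw [this, Finset.sum_powerset_neg_one_pow_card]
  by_cases h : R = Finset.univ
  · rw [if_pos h, if_pos (by simp [h]), Int.cast_one]
  · rw [if_neg h, if_neg (by simpa [Finset.compl_eq_empty_iff] using h), Int.cast_zero]

lemma ryser_core (F : Fin d → Fin d → ℝ) :
    ∑ S : Finset (Fin d), (-1 : ℝ) ^ (d - S.card) * ∏ t : Fin d, (∑ j ∈ S, F t j)
      = ∑ g : Equiv.Perm (Fin d), ∏ t : Fin d, F t (g t) := by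
  classical
  have step1 : ∀ S : Finset (Fin d),
      (∏ t : Fin d, (∑ j ∈ S, F t j))
        = ∑ p ∈ Fintype.piFinset (fun _ : Fin d => S), ∏ t, F t (p t) :=
    fun S => Finset.prod_univ_sum _ _
  calc ∑ S : Finset (Fin d), (-1 : ℝ) ^ (d - S.card) * ∏ t : Fin d, (∑ j ∈ S, F t j)
      = ∑ S : Finset (Fin d), ∑ p : Fin d → Fin d,
          (if (∀ t, p t ∈ S) then (-1 : ℝ) ^ (d - S.card) * ∏ t, F t (p t) else 0) := by
        refine Finset.sum_congr rfl (fun S _ => ?_)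
        rw [step1, Finset.mul_sum]
        rw [eq_comm]
        have hpi : Fintype.piFinset (fun _ : Fin d => S)
            = Finset.univ.filter (fun p : Fin d → Fin d => ∀ t, p t ∈ S) := by
          ext p; simp [Fintype.mem_piFinset]
        rw [← Finset.sum_filter, ← hpi]
    _ = ∑ p : Fin d → Fin d, ∑ S : Finset (Fin d),
          (if (∀ t, p t ∈ S) then (-1 : ℝ) ^ (d - S.card) * ∏ t, F t (p t) else 0) :=
        Finset.sum_comm
    _ = ∑ p : Fin d → Fin d,
          (if Function.Surjective p then 1 else 0) * ∏ t, F t (p t) := by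
        refine Finset.sum_congr rfl (fun p _ => ?_)
        have h1 : ∀ S : Finset (Fin d), (∀ t, p t ∈ S) ↔ (Finset.univ.image p ⊆ S) := by
          intro S
          constructor
          · intro h i hi
            rcases Finset.mem_image.mp hi with ⟨t, _, rfl⟩
            exact h t
          · intro h t
            exact h (Finset.mem_image_of_mem p (Finset.mem_univ t))
        have step : ∑ S : Finset (Fin d),
            (if (∀ t, p t ∈ S) then (-1 : ℝ) ^ (d - S.card) * ∏ t, F t (p t) else 0)
            = (∑ S : Finset (Fin d),
                (if (Finset.univ.image p ⊆ S) then (-1 : ℝ) ^ (d - S.card) else 0))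
              * ∏ t, F t (p t) := by
          rw [Finset.sum_mul]
          refine Finset.sum_congr rfl (fun S _ => ?_)
          by_cases h : Finset.univ.image p ⊆ S
          · rw [if_pos ((h1 S).mpr h), if_pos h]
          · rw [if_neg (fun hh => h ((h1 S).mp hh)), if_neg h, zero_mul]
        rw [step, sum_indicator_subset]
        congr 2
        rw [eq_iff_iff]
        constructor
        · intro h y
          have : y ∈ Finset.univ.image p := by rw [h]; exact Finset.mem_univ y
          rcases Finset.mem_image.mp this with ⟨t, _, ht⟩
          exact ⟨t, ht⟩
        · intro h
          apply Finset.eq_univ_of_forall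
          intro y
          rcases h y with ⟨t, ht⟩
          exact Finset.mem_image.mpr ⟨t, Finset.mem_univ t, ht⟩
    _ = ∑ p ∈ Finset.univ.filter (fun p : Fin d → Fin d => Function.Surjective p),
          ∏ t, F t (p t) := by
        rw [Finset.sum_filter]
        refine Finset.sum_congr rfl (fun p _ => ?_)
        by_cases h : Function.Surjective p
        · rw [if_pos h, if_pos h, one_mul]
        · rw [if_neg h, if_neg h, zero_mul]
    _ = ∑ g : Equiv.Perm (Fin d), ∏ t, F t (g t) := by
        refine Finset.sum_bij
          (fun p hp => Equiv.ofBijective p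
            (Finite.surjective_iff_bijective.mp (Finset.mem_filter.mp hp).2))
          (fun p hp => Finset.mem_univ _) ?_ ?_ ?_
        · intro p hp p' hp' h
          funext t
          have := congrArg (fun e : Equiv.Perm (Fin d) => e t) h
          simpa [Equiv.ofBijective] using this
        · intro g _
          refine ⟨(g : Fin d → Fin d), Finset.mem_filter.mpr ⟨Finset.mem_univ _, g.surjective⟩, ?_⟩
          ext t
          simp
        · intro p hp
          rfl


lemma interp_step (c : Finset (Fin n) → ℝ) (q : (Fin n → ℝ) → ℝ)
    (hq : ∀ x : Fin n → ℝ,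
      q x = ∑ T ∈ Finset.univ.filter (fun T : Finset (Fin n) => T.card ≤ d),
        c T * ∏ i ∈ T, x i)
    (u : Fin n → ℝ) (i0 : Fin n) :
    q u = (1 + u i0) / 2 * q (Function.update u i0 1)
        + (1 - u i0) / 2 * q (Function.update u i0 (-1)) := by
  rw [hq u, hq (Function.update u i0 1), hq (Function.update u i0 (-1)), Finset.mul_sum, Finset.mul_sum, ← Finset.sum_add_distrib]
  refine Finset.sum_congr rfl fun T _ => ?_
  have hup : ∀ (a : ℝ), ∏ i ∈ T.erase i0, (Function.update u i0 a) i
      = ∏ i ∈ T.erase i0, u i := by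
    intro a
    refine Finset.prod_congr rfl fun i hi => ?_
    exact Function.update_of_ne (Finset.ne_of_mem_erase hi) _ _
  by_cases hmem : i0 ∈ T
  · rw [← Finset.mul_prod_erase T _ hmem, ← Finset.mul_prod_erase T _ hmem,
      ← Finset.mul_prod_erase T _ hmem, hup, hup, Function.update_self,
      Function.update_self]
    ring
  · have hup2 : ∀ (a : ℝ), ∏ i ∈ T, (Function.update u i0 a) i = ∏ i ∈ T, u i := by
      intro a
      refine Finset.prod_congr rfl fun i hi => ?_
      exact Function.update_of_ne (by rintro rfl; exact hmem hi) _ _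
    rw [hup2, hup2]
    ring

lemma q_box_bound (c : Finset (Fin n) → ℝ) (q : (Fin n → ℝ) → ℝ)
    (hq : ∀ x : Fin n → ℝ,
      q x = ∑ T ∈ Finset.univ.filter (fun T : Finset (Fin n) => T.card ≤ d),
        c T * ∏ i ∈ T, x i)
    (hq01 : ∀ x : Fin n → ℝ, (∀ i, x i = 1 ∨ x i = -1) → q x ∈ Set.Icc (0 : ℝ) 1)
    (u : Fin n → ℝ) (hu : ∀ i, |u i| ≤ 1) : q u ∈ Set.Icc (0 : ℝ) 1 := by
  classical
  suffices H : ∀ m : ℕ, ∀ u : Fin n → ℝ, (∀ i, |u i| ≤ 1) →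
      (Finset.univ.filter (fun i => u i ≠ 1 ∧ u i ≠ -1)).card ≤ m →
      q u ∈ Set.Icc (0 : ℝ) 1 by
    exact H _ u hu le_rfl
  intro m
  induction m with
  | zero =>
    intro u hu hcard
    apply hq01
    intro i
    by_contra hcon
    push_neg at hcon
    have : i ∈ Finset.univ.filter (fun i => u i ≠ 1 ∧ u i ≠ -1) := by
      simp [hcon.1, hcon.2]
    have := Finset.card_pos.mpr ⟨i, this⟩
    omega
  | succ m ih =>
    intro u hu hcard
    by_cases hemp : (Finset.univ.filter (fun i => u i ≠ 1 ∧ u i ≠ -1)) = ∅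
    · apply hq01
      intro i
      by_contra hcon
      push_neg at hcon
      have : i ∈ Finset.univ.filter (fun i => u i ≠ 1 ∧ u i ≠ -1) := by
        simp [hcon.1, hcon.2]
      simp [hemp] at this
    · obtain ⟨i0, hi0⟩ := Finset.nonempty_iff_ne_empty.mpr hemp
      have hsub : ∀ (a : ℝ), a = 1 ∨ a = -1 →
          (Finset.univ.filter (fun i => (Function.update u i0 a) i ≠ 1
              ∧ (Function.update u i0 a) i ≠ -1)).card ≤ m := by
        intro a ha
        have hss : (Finset.univ.filter (fun i => (Function.update u i0 a) i ≠ 1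
            ∧ (Function.update u i0 a) i ≠ -1))
            ⊆ (Finset.univ.filter (fun i => u i ≠ 1 ∧ u i ≠ -1)).erase i0 := by
          intro j hj
          simp only [Finset.mem_filter, Finset.mem_univ, true_and] at hj
          have hji : j ≠ i0 := by
            rintro rfl
            rw [Function.update_self] at hj
            rcases ha with rfl | rfl
            · exact hj.1 rfl
            · exact hj.2 rfl
          rw [Function.update_of_ne hji] at hj
          exact Finset.mem_erase.mpr ⟨hji, by simp [hj.1, hj.2]⟩
        have := Finset.card_le_card hss
        have h2 := Finset.card_erase_of_mem hi0
        omega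
      have hbox : ∀ (a : ℝ), a = 1 ∨ a = -1 → ∀ i, |(Function.update u i0 a) i| ≤ 1 := by
        intro a ha i
        by_cases h : i = i0
        · subst h; rw [Function.update_self]
          rcases ha with rfl | rfl <;> simp
        · rw [Function.update_of_ne h]; exact hu i
      have h1 := ih (Function.update u i0 1) (hbox 1 (Or.inl rfl)) (hsub 1 (Or.inl rfl))
      have h2 := ih (Function.update u i0 (-1)) (hbox (-1) (Or.inr rfl)) (hsub (-1) (Or.inr rfl))
      rw [Set.mem_Icc] at h1 h2 ⊢
      rw [interp_step c q hq u i0]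
      have hub := hu i0
      rw [abs_le] at hub
      constructor <;> nlinarith [h1.1, h1.2, h2.1, h2.2, hub.1, hub.2]

end AAIKSaux

set_option maxHeartbeats 1000000 in
/-- If a partial Boolean function `f` on `X ⊆ {-1,1}ⁿ` is approximated
to error `ε < 1/2` by a degree-`d` multilinear polynomial with values in `[0,1]` on the cube,
then it is approximated to error `ε' = 1/2 − (1/2 − ε)/B(d)` by a `d`-multilinear form
bounded by 1 on `{-1,1}`-valued inputs. -/
theorem approx_deg_to_approx_bmdeg (d n : ℕ) (hd : 1 ≤ d) (hn : 1 ≤ n)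
    (X : Set (Fin n → ℝ)) (hX : ∀ x ∈ X, ∀ i, x i = 1 ∨ x i = -1)
    (f : (Fin n → ℝ) → ℝ) (hf : ∀ x ∈ X, f x = 0 ∨ f x = 1)
    (ε : ℝ) (hε0 : 0 ≤ ε) (hε : ε < 1 / 2)
    (c : Finset (Fin n) → ℝ) (q : (Fin n → ℝ) → ℝ)
    (hq : ∀ x : Fin n → ℝ,
      q x = ∑ T ∈ Finset.univ.filter (fun T : Finset (Fin n) => T.card ≤ d),
        c T * ∏ i ∈ T, x i)
    (hq01 : ∀ x : Fin n → ℝ, (∀ i, x i = 1 ∨ x i = -1) → q x ∈ Set.Icc (0 : ℝ) 1)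
    (happ : ∀ x ∈ X, |q x - f x| ≤ ε) :
    ∃ pt : MultilinearMap ℝ (fun _ : Fin d => (Fin (n + 1) → ℝ)) ℝ,
      (∀ z : Fin d → (Fin (n + 1) → ℝ),
        (∀ j i, z j i = 1 ∨ z j i = -1) → |pt z| ≤ 1) ∧
      (∀ x ∈ X, |pt (fun _ => Fin.cons 1 x) - f x| ≤ 1 / 2 - (1 / 2 - ε) / Bconst d) := by
  classical
  set A : Finset (Finset (Fin n)) :=
    Finset.univ.filter (fun T : Finset (Fin n) => T.card ≤ d) with hA
  set c' : Finset (Fin n) → ℝ := fun T => 2 * c T - (if T = ∅ then 1 else 0) with hc'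
  -- the shifted polynomial
  have hp' : ∀ x : Fin n → ℝ, (∑ T ∈ A, c' T * ∏ i ∈ T, x i) = 2 * q x - 1 := by
    intro x
    have h1 : (∑ T ∈ A, c' T * ∏ i ∈ T, x i)
        = 2 * (∑ T ∈ A, c T * ∏ i ∈ T, x i)
          - ∑ T ∈ A, (if T = ∅ then 1 else 0) * ∏ i ∈ T, x i := by
      rw [Finset.mul_sum, ← Finset.sum_sub_distrib]
      refine Finset.sum_congr rfl fun T _ => ?_
      simp only [hc']
      ring
    have h2 : (∑ T ∈ A, (if T = ∅ then (1:ℝ) else 0) * ∏ i ∈ T, x i) = 1 := by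
      have : ∀ T ∈ A, (if T = ∅ then (1:ℝ) else 0) * ∏ i ∈ T, x i
          = if T = ∅ then 1 else 0 := by
        intro T _
        by_cases h : T = ∅
        · simp [h]
        · simp [h]
      rw [Finset.sum_congr rfl this, Finset.sum_ite_eq' A ∅ (fun _ => (1:ℝ))]
      have : (∅ : Finset (Fin n)) ∈ A := by simp [hA]
      rw [if_pos this]
    rw [h1, h2, ← hq x]
  -- the normalizing constant
  set D : ℝ := ∑ s ∈ Finset.Icc 1 d, (d.choose s : ℝ) * (s : ℝ) ^ d with hDdef
  have hDfac : (d.factorial : ℝ) ≤ D := by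
    have hmem : d ∈ Finset.Icc 1 d := by simp [hd]
    have hsingle : (d.choose d : ℝ) * (d : ℝ) ^ d ≤ D := by
      refine Finset.single_le_sum (f := fun s => (d.choose s : ℝ) * (s : ℝ) ^ d) ?_ hmem
      intro s _
      positivity
    have : (d.factorial : ℝ) ≤ (d.choose d : ℝ) * (d : ℝ) ^ d := by
      rw [Nat.choose_self]
      have := Nat.factorial_le_pow d
      push_cast
      calc (d.factorial : ℝ) ≤ ((d ^ d : ℕ) : ℝ) := by exact_mod_cast this
        _ = 1 * (d:ℝ) ^ d := by push_cast; ring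
    linarith
  have hD0 : 0 < D := by
    have : (0:ℝ) < (d.factorial : ℝ) := by exact_mod_cast d.factorial_pos
    linarith
  have hBeq : Bconst d = D / (d.factorial : ℝ) := by
    rw [Bconst, ← hDdef, one_div, inv_mul_eq_div]
  -- the big multilinear map
  set G : MultilinearMap ℝ (fun _ : Fin d => (Fin (n + 1) → ℝ)) ℝ :=
    ∑ T ∈ A, ∑ g : Equiv.Perm (Fin d),
      c' T • monoM d n (fun j => coordOf T d (g.symm j)) with hG
  have hGval : ∀ z : Fin d → (Fin (n + 1) → ℝ),
      G z = ∑ T ∈ A, c' T * ∑ g : Equiv.Perm (Fin d),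
        ∏ t : Fin d, z (g t) (coordOf T d t) := by
    intro z
    rw [hG, MultilinearMap.sum_apply]
    refine Finset.sum_congr rfl fun T _ => ?_
    rw [MultilinearMap.sum_apply, Finset.mul_sum]
    refine Finset.sum_congr rfl fun g _ => ?_
    rw [MultilinearMap.smul_apply, monoM_apply, smul_eq_mul]
    congr 1
    rw [← Equiv.prod_comp g (fun j => z j (coordOf T d (g.symm j)))]
    refine Finset.prod_congr rfl fun t _ => ?_
    rw [Equiv.symm_apply_apply]
  -- diagonal value
  have hGdiag : ∀ x : Fin n → ℝ,
      G (fun _ => Fin.cons 1 x) = (d.factorial : ℝ) * (2 * q x - 1) := by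
    intro x
    rw [hGval]
    have h1 : ∀ T ∈ A, (∑ g : Equiv.Perm (Fin d),
        ∏ t : Fin d, (Fin.cons 1 x : Fin (n+1) → ℝ) (coordOf T d t))
          = (d.factorial : ℝ) * ∏ i ∈ T, x i := by
      intro T hT
      have hTd : T.card ≤ d := by
        simp only [hA, Finset.mem_filter] at hT
        exact hT.2
      have hprod : (∏ t : Fin d, (Fin.cons 1 x : Fin (n+1) → ℝ) (coordOf T d t))
          = ∏ i ∈ T, x i := by
        rw [prod_coordOf T hTd]
        simp [Fin.cons_zero, Fin.cons_succ]
      rw [Finset.sum_congr rfl (fun g _ => hprod), Finset.sum_const, Finset.card_univ,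
        Fintype.card_perm, Fintype.card_fin, nsmul_eq_mul]
    rw [Finset.sum_congr rfl (fun T hT => by rw [h1 T hT])]
    rw [← hp' x, Finset.mul_sum]
    refine Finset.sum_congr rfl fun T _ => ?_
    ring
  -- cube bound
  have hGbound : ∀ Z : Fin d → (Fin (n + 1) → ℝ),
      (∀ j i, Z j i = 1 ∨ Z j i = -1) → |G Z| ≤ D := by
    intro Z hz
    have hzsq : ∀ j, Z j 0 * Z j 0 = 1 := by
      intro j; rcases hz j 0 with h | h <;> rw [h] <;> norm_num
    have hP0 : (∏ j, Z j 0) * (∏ j, Z j 0) = 1 := by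
      rw [← Finset.prod_mul_distrib]
      rw [Finset.prod_congr rfl (fun j _ => hzsq j)]
      exact Finset.prod_const_one
    have habs0 : |∏ j, Z j 0| = 1 := by
      rw [Finset.abs_prod]
      rw [Finset.prod_congr rfl (fun j (_ : j ∈ Finset.univ) => ?_), Finset.prod_const_one]
      rcases hz j 0 with h | h <;> rw [h] <;> norm_num
    set v : Finset (Fin d) → Fin (n+1) → ℝ := fun S m => ∑ j ∈ S, Z j 0 * Z j m with hv
    -- step: per T, inclusion-exclusion
    have hstepT : ∀ T ∈ A, (∑ g : Equiv.Perm (Fin d), ∏ t : Fin d, Z (g t) (coordOf T d t))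
        = (∏ j, Z j 0) * ∑ S : Finset (Fin d),
            (-1 : ℝ) ^ (d - S.card) * ∏ t : Fin d, v S (coordOf T d t) := by
      intro T _
      have hry := ryser_core (fun t j => Z j 0 * Z j (coordOf T d t))
      have h2 : ∀ g : Equiv.Perm (Fin d),
          (∏ t : Fin d, (Z (g t) 0 * Z (g t) (coordOf T d t)))
            = (∏ j, Z j 0) * ∏ t : Fin d, Z (g t) (coordOf T d t) := by
        intro g
        rw [Finset.prod_mul_distrib]
        congr 1
        exact Equiv.prod_comp g (fun j => Z j 0)
      have h3 : (∑ S : Finset (Fin d),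
            (-1 : ℝ) ^ (d - S.card) * ∏ t : Fin d, v S (coordOf T d t))
          = (∏ j, Z j 0) * ∑ g : Equiv.Perm (Fin d), ∏ t : Fin d, Z (g t) (coordOf T d t) := by
        rw [hry, Finset.sum_congr rfl (fun g _ => h2 g), ← Finset.mul_sum]
      rw [h3, ← mul_assoc, hP0, one_mul]
    -- the inner sums W_S
    have hWemp : (∑ T ∈ A, c' T * ∏ t : Fin d, v ∅ (coordOf T d t)) = 0 := by
      refine Finset.sum_eq_zero fun T _ => ?_
      have : (∏ t : Fin d, v ∅ (coordOf T d t)) = 0 := by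
        refine Finset.prod_eq_zero (Finset.mem_univ (⟨0, hd⟩ : Fin d)) ?_
        simp [hv]
      rw [this, mul_zero]
    have hW : ∀ S : Finset (Fin d), |∑ T ∈ A, c' T * ∏ t : Fin d, v S (coordOf T d t)|
        ≤ (S.card : ℝ) ^ d := by
      intro S
      rcases Finset.eq_empty_or_nonempty S with rfl | hS
      · rw [hWemp]
        simp
      · have hs0 : 0 < S.card := Finset.card_pos.mpr hS
        have hsR : (0:ℝ) < (S.card : ℝ) := by exact_mod_cast hs0
        set u : Fin n → ℝ := fun i => v S i.succ / (S.card : ℝ) with hu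
        have hv0 : v S 0 = (S.card : ℝ) := by
          rw [hv]
          simp only
          rw [Finset.sum_congr rfl (fun j _ => hzsq j), Finset.sum_const, nsmul_eq_mul,
            mul_one]
        have hvs : ∀ i : Fin n, v S i.succ = (S.card : ℝ) * u i := by
          intro i
          rw [hu]
          field_simp
        have hui : ∀ i, |u i| ≤ 1 := by
          intro i
          rw [hu]
          simp only
          rw [abs_div, abs_of_pos hsR, div_le_one hsR]
          calc |∑ j ∈ S, Z j 0 * Z j i.succ| ≤ ∑ j ∈ S, |Z j 0 * Z j i.succ| :=
                Finset.abs_sum_le_sum_abs _ _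
            _ = ∑ j ∈ S, 1 := by
                refine Finset.sum_congr rfl fun j _ => ?_
                rw [abs_mul]
                rcases hz j 0 with h | h <;> rcases hz j i.succ with h' | h' <;>
                  rw [h, h'] <;> norm_num
            _ = (S.card : ℝ) := by rw [Finset.sum_const, nsmul_eq_mul, mul_one]
        have hqu := q_box_bound c q hq hq01 u hui
        rw [Set.mem_Icc] at hqu
        have hWeq : (∑ T ∈ A, c' T * ∏ t : Fin d, v S (coordOf T d t))
            = (S.card : ℝ) ^ d * (2 * q u - 1) := by
          have h4 : ∀ T ∈ A, c' T * ∏ t : Fin d, v S (coordOf T d t)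
              = (S.card : ℝ) ^ d * (c' T * ∏ i ∈ T, u i) := by
            intro T hT
            have hTd : T.card ≤ d := by
              simp only [hA, Finset.mem_filter] at hT
              exact hT.2
            rw [prod_coordOf T hTd, hv0]
            have h5 : (∏ i ∈ T, v S i.succ) = (S.card : ℝ) ^ T.card * ∏ i ∈ T, u i := by
              rw [Finset.prod_congr rfl (fun i _ => hvs i), Finset.prod_mul_distrib,
                Finset.prod_const]
            rw [h5]
            rw [show (S.card : ℝ) ^ (d - T.card) * ((S.card : ℝ) ^ T.card * ∏ i ∈ T, u i)
                = ((S.card : ℝ) ^ (d - T.card) * (S.card : ℝ) ^ T.card) * ∏ i ∈ T, u i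
              from by ring]
            rw [← pow_add, Nat.sub_add_cancel hTd]
            ring
          rw [Finset.sum_congr rfl h4, ← Finset.mul_sum, hp' u]
        rw [hWeq, abs_mul, abs_pow, abs_of_pos hsR]
        have : |2 * q u - 1| ≤ 1 := by
          rw [abs_le]
          constructor <;> linarith [hqu.1, hqu.2]
        calc (S.card : ℝ) ^ d * |2 * q u - 1| ≤ (S.card : ℝ) ^ d * 1 := by
              apply mul_le_mul_of_nonneg_left this
              exact pow_nonneg hsR.le d
          _ = (S.card : ℝ) ^ d := mul_one _
    -- rearrange G Z
    have hGZ : G Z = ∑ S : Finset (Fin d), (∏ j, Z j 0) *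
        ((-1 : ℝ) ^ (d - S.card) * ∑ T ∈ A, c' T * ∏ t : Fin d, v S (coordOf T d t)) := by
      rw [hGval]
      rw [Finset.sum_congr rfl (fun T hT => by rw [hstepT T hT])]
      have hL : ∀ T ∈ A, c' T * ((∏ j, Z j 0) * ∑ S : Finset (Fin d),
            (-1 : ℝ) ^ (d - S.card) * ∏ t : Fin d, v S (coordOf T d t))
          = ∑ S : Finset (Fin d), (∏ j, Z j 0) *
              ((-1 : ℝ) ^ (d - S.card) * (c' T * ∏ t : Fin d, v S (coordOf T d t))) := by
        intro T _
        rw [Finset.mul_sum, Finset.mul_sum]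
        refine Finset.sum_congr rfl fun S _ => ?_
        ring
      rw [Finset.sum_congr rfl hL, Finset.sum_comm]
      simp only [Finset.mul_sum]
    have hcount : (∑ S : Finset (Fin d), ((S.card : ℝ)) ^ d) = D := by
      rw [← Finset.powerset_univ, Finset.sum_powerset]
      have hcu : (Finset.univ : Finset (Fin d)).card = d := by simp
      have hinner : ∀ j ∈ Finset.range ((Finset.univ : Finset (Fin d)).card + 1),
          (∑ S ∈ Finset.powersetCard j (Finset.univ : Finset (Fin d)), ((S.card : ℝ)) ^ d)
            = (d.choose j : ℝ) * (j : ℝ) ^ d := by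
        intro j _
        have : ∀ S ∈ Finset.powersetCard j (Finset.univ : Finset (Fin d)),
            ((S.card : ℝ)) ^ d = (j : ℝ) ^ d := by
          intro S hS
          rw [(Finset.mem_powersetCard.mp hS).2]
        rw [Finset.sum_congr rfl this, Finset.sum_const, Finset.card_powersetCard, hcu]
        simp [nsmul_eq_mul]
      rw [Finset.sum_congr rfl hinner, hcu]
      have hrange : Finset.range (d + 1) = insert 0 (Finset.Icc 1 d) := by
        ext j
        simp only [Finset.mem_range, Finset.mem_insert, Finset.mem_Icc]
        omega
      rw [hrange, Finset.sum_insert (by simp)]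
      have : ((0:ℕ) : ℝ) ^ d = 0 := by
        rw [Nat.cast_zero]
        exact zero_pow (by omega)
      rw [this, mul_zero, zero_add, hDdef]
    calc |G Z| ≤ ∑ S : Finset (Fin d), |(∏ j, Z j 0) *
          ((-1 : ℝ) ^ (d - S.card) * ∑ T ∈ A, c' T * ∏ t : Fin d, v S (coordOf T d t))| := by
          rw [hGZ]; exact Finset.abs_sum_le_sum_abs _ _
      _ ≤ ∑ S : Finset (Fin d), ((S.card : ℝ)) ^ d := by
          refine Finset.sum_le_sum fun S _ => ?_
          rw [abs_mul, habs0, one_mul, abs_mul, abs_pow, abs_neg, abs_one, one_pow, one_mul]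
          exact hW S
      _ = D := hcount
  -- the final map
  refine ⟨((1:ℝ)/2) • monoM d n (fun _ => 0) + ((1:ℝ)/(2*D)) • G, ?_, ?_⟩
  · intro z hz
    rw [MultilinearMap.add_apply, MultilinearMap.smul_apply, MultilinearMap.smul_apply,
      monoM_apply, smul_eq_mul, smul_eq_mul]
    have h1 : |(1:ℝ)/2 * ∏ j, z j 0| = 1/2 := by
      rw [abs_mul, Finset.abs_prod]
      rw [Finset.prod_congr rfl (fun j (_ : j ∈ Finset.univ) => ?_), Finset.prod_const_one]
      · norm_num
      · rcases hz j 0 with h | h <;> rw [h] <;> norm_num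
    have h2 : |(1:ℝ)/(2*D) * G z| ≤ 1/2 := by
      rw [abs_mul]
      have : |(1:ℝ)/(2*D)| = 1/(2*D) := abs_of_pos (by positivity)
      rw [this]
      calc 1/(2*D) * |G z| ≤ 1/(2*D) * D := by
            apply mul_le_mul_of_nonneg_left (hGbound z hz)
            positivity
        _ = 1/2 := by
              rw [div_mul_eq_mul_div, one_mul,
                div_eq_div_iff (ne_of_gt (by positivity)) (by norm_num : (2:ℝ) ≠ 0)]
              ring
    calc |(1:ℝ)/2 * ∏ j, z j 0 + (1:ℝ)/(2*D) * G z|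
        ≤ |(1:ℝ)/2 * ∏ j, z j 0| + |(1:ℝ)/(2*D) * G z| := abs_add_le _ _
      _ ≤ 1/2 + 1/2 := by rw [h1]; linarith
      _ = 1 := by norm_num
  · intro x hx
    rw [MultilinearMap.add_apply, MultilinearMap.smul_apply, MultilinearMap.smul_apply,
      monoM_apply, smul_eq_mul, smul_eq_mul, hGdiag x]
    have hcons1 : (∏ j : Fin d, (Fin.cons 1 x : Fin (n+1) → ℝ) 0) = 1 := by
      simp [Fin.cons_zero]
    rw [hcons1, mul_one]
    set r : ℝ := (d.factorial : ℝ) / D with hr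
    have hfac0 : (0:ℝ) < (d.factorial : ℝ) := by exact_mod_cast d.factorial_pos
    have hr0 : 0 < r := div_pos hfac0 hD0
    have hr1 : r ≤ 1 := (div_le_one hD0).mpr hDfac
    have hval : (1:ℝ)/2 + 1/(2*D) * ((d.factorial : ℝ) * (2 * q x - 1))
        = 1/2 + r * (2 * q x - 1) / 2 := by
      rw [hr]
      ring
    rw [hval]
    have hRHS : (1:ℝ)/2 - (1/2 - ε) / Bconst d = 1/2 - (1/2 - ε) * r := by
      rw [hBeq, hr, div_div_eq_mul_div, mul_div_assoc]
    rw [hRHS]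
    have hq01x := hq01 x (hX x hx)
    rw [Set.mem_Icc] at hq01x
    have happx := happ x hx
    rcases hf x hx with hfx | hfx <;> rw [hfx] <;> rw [hfx] at happx <;>
        rw [abs_le] at happx ⊢ <;> constructor
    · nlinarith [mul_nonneg hr0.le hq01x.1, mul_nonneg hr0.le hε0, hr1]
    · nlinarith [mul_le_mul_of_nonneg_left happx.2 hr0.le]
    · nlinarith [mul_le_mul_of_nonneg_left (show (1:ℝ) - ε ≤ q x by linarith [happx.1]) hr0.le]
    · nlinarith [mul_le_mul_of_nonneg_left hq01x.2 hr0.le, mul_nonneg hr0.le hε0]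
end

section
/- Let A be an n×m real matrix with no zero rows and no zero columns, and let k : Fin n → ℕ₊ and l : Fin m → ℕ₊. Let A' be the split matrix of A with multiplicities k and l: the matrix with rows indexed by pairs (i,s), i ∈ Fin n, s ∈ Fin k_i, columns indexed by pairs (j,t), j ∈ Fin m, t ∈ Fin l_j, and entry A'((i,s),(j,t)) = a_{ij}/(k_i·l_j). Then ‖A'‖_{∞→1} = ‖A‖_{∞→1}, where ‖·‖_{∞→1} denotes the infinity-to-one norm. -/
open scoped BigOperators

/-- The ℓ²→ℓ² operator norm of a real matrix. -/
noncomputable def l2OpNorm {α β : Type*} [Fintype α] [Fintype β] [DecidableEq β]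
    (A : Matrix α β ℝ) : ℝ :=
  ‖LinearMap.toContinuousLinearMap (Matrix.toEuclideanLin A)‖

/-- The ∞→1 norm of a real matrix: `max_{x ∈ {-1,1}ⁿ, y ∈ {-1,1}^m} xᵀ A y`. -/
noncomputable def normInftyOne {α β : Type*} [Fintype α] [Fintype β] (A : Matrix α β ℝ) : ℝ :=
  ⨆ p : (α → Bool) × (β → Bool),
    ∑ i, ∑ j, (if p.1 i then (1:ℝ) else -1) * A i j * (if p.2 j then (1:ℝ) else -1)

/-- The Grothendieck norm: sup over `k` and families of unit vectors of `Σ a_{ij} ⟨p_i, q_j⟩`. -/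
noncomputable def grothendieckNorm {α β : Type*} [Fintype α] [Fintype β]
    (A : Matrix α β ℝ) : ℝ :=
  sSup { r : ℝ | ∃ (k : ℕ) (p : α → EuclideanSpace ℝ (Fin k)) (q : β → EuclideanSpace ℝ (Fin k)),
    (∀ i, ‖p i‖ = 1) ∧ (∀ j, ‖q j‖ = 1) ∧
    r = ∑ i, ∑ j, A i j * (inner ℝ (p i) (q j) : ℝ) }

/-- The matrix obtained from `A` by splitting row `i` into `k i` equal rows and
column `j` into `l j` equal columns. -/
noncomputable def splitMatrix {n m : ℕ} (A : Matrix (Fin n) (Fin m) ℝ)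
    (k : Fin n → ℕ+) (l : Fin m → ℕ+) :
    Matrix ((i : Fin n) × Fin (k i : ℕ)) ((j : Fin m) × Fin (l j : ℕ)) ℝ :=
  fun p q => A p.1 q.1 / (((k p.1 : ℕ) : ℝ) * ((l q.1 : ℕ) : ℝ))

def sgn (b : Bool) : ℝ := if b then 1 else -1

lemma abs_eq_sgn_mul (c : ℝ) : |c| = sgn (decide (0 ≤ c)) * c := by
  rcases le_or_gt 0 c with h | h
  · simp [sgn, h, abs_of_nonneg h]
  · simp [sgn, not_le.mpr h, abs_of_neg h]

lemma bilinear_le_normInftyOne {α β : Type*} [Fintype α] [Fintype β] (A : Matrix α β ℝ)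
    (u : α → ℝ) (v : β → ℝ) (hu : ∀ i, |u i| ≤ 1) (hv : ∀ j, |v j| ≤ 1) :
    ∑ i, ∑ j, u i * A i j * v j ≤ normInftyOne A := by
  set ε : α → Bool := fun i => decide (0 ≤ ∑ j, A i j * v j) with hε
  set δ : β → Bool := fun j => decide (0 ≤ ∑ i, sgn (ε i) * A i j) with hδ
  have step1 : ∑ i, ∑ j, u i * A i j * v j ≤ ∑ i, sgn (ε i) * ∑ j, A i j * v j := by
    apply Finset.sum_le_sum; intro i _
    have h1 : ∑ j, u i * A i j * v j = u i * ∑ j, A i j * v j := by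
      rw [Finset.mul_sum]; exact Finset.sum_congr rfl fun j _ => by ring
    rw [h1, hε]
    calc u i * ∑ j, A i j * v j ≤ |u i * ∑ j, A i j * v j| := le_abs_self _
      _ = |u i| * |∑ j, A i j * v j| := abs_mul _ _
      _ ≤ 1 * |∑ j, A i j * v j| := mul_le_mul_of_nonneg_right (hu i) (abs_nonneg _)
      _ = sgn (decide (0 ≤ ∑ j, A i j * v j)) * ∑ j, A i j * v j := by
          rw [one_mul, ← abs_eq_sgn_mul]
  have swap : ∑ i, sgn (ε i) * ∑ j, A i j * v j = ∑ j, v j * ∑ i, sgn (ε i) * A i j := by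
    simp_rw [Finset.mul_sum]
    rw [Finset.sum_comm]
    exact Finset.sum_congr rfl fun j _ => Finset.sum_congr rfl fun i _ => by ring
  have step2 : ∑ j, v j * ∑ i, sgn (ε i) * A i j ≤ ∑ j, sgn (δ j) * ∑ i, sgn (ε i) * A i j := by
    apply Finset.sum_le_sum; intro j _
    rw [hδ]
    calc v j * ∑ i, sgn (ε i) * A i j ≤ |v j * ∑ i, sgn (ε i) * A i j| := le_abs_self _
      _ = |v j| * |∑ i, sgn (ε i) * A i j| := abs_mul _ _
      _ ≤ 1 * |∑ i, sgn (ε i) * A i j| := mul_le_mul_of_nonneg_right (hv j) (abs_nonneg _)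
      _ = sgn (decide (0 ≤ ∑ i, sgn (ε i) * A i j)) * ∑ i, sgn (ε i) * A i j := by
          rw [one_mul, ← abs_eq_sgn_mul]
  have final : ∑ j, sgn (δ j) * ∑ i, sgn (ε i) * A i j
      = ∑ i, ∑ j, (if ε i then (1:ℝ) else -1) * A i j * (if δ j then (1:ℝ) else -1) := by
    simp_rw [Finset.mul_sum]
    rw [Finset.sum_comm]
    exact Finset.sum_congr rfl fun i _ => Finset.sum_congr rfl fun j _ => by cases ε i <;> cases δ j <;> simp [sgn]
  have hb : BddAbove (Set.range fun p : (α → Bool) × (β → Bool) =>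
      ∑ i, ∑ j, (if p.1 i then (1:ℝ) else -1) * A i j * (if p.2 j then (1:ℝ) else -1)) :=
    Set.Finite.bddAbove (Set.finite_range _)
  calc ∑ i, ∑ j, u i * A i j * v j ≤ ∑ j, sgn (δ j) * ∑ i, sgn (ε i) * A i j := by
        rw [← swap] at step2; exact step1.trans step2
    _ = _ := final
    _ ≤ normInftyOne A := le_ciSup hb (ε, δ)

/-- Splitting rows and columns preserves the ∞→1 norm. -/
theorem normInftyOne_splitMatrix (n m : ℕ) (A : Matrix (Fin n) (Fin m) ℝ)
    (hrow : ∀ i, ∃ j, A i j ≠ 0) (hcol : ∀ j, ∃ i, A i j ≠ 0)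
    (k : Fin n → ℕ+) (l : Fin m → ℕ+) :
    normInftyOne (splitMatrix A k l) = normInftyOne A := by
  have hk : ∀ i : Fin n, (0:ℝ) < ((k i : ℕ) : ℝ) := fun i => by exact_mod_cast (k i).pos
  have hl : ∀ j : Fin m, (0:ℝ) < ((l j : ℕ) : ℝ) := fun j => by exact_mod_cast (l j).pos
  have hbA : BddAbove (Set.range fun p : (Fin n → Bool) × (Fin m → Bool) =>
      ∑ i, ∑ j, (if p.1 i then (1:ℝ) else -1) * A i j * (if p.2 j then (1:ℝ) else -1)) :=
    Set.Finite.bddAbove (Set.finite_range _)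
  have hbS : BddAbove (Set.range fun p : (((i : Fin n) × Fin (k i : ℕ)) → Bool) ×
      (((j : Fin m) × Fin (l j : ℕ)) → Bool) =>
      ∑ i, ∑ j, (if p.1 i then (1:ℝ) else -1) * splitMatrix A k l i j *
        (if p.2 j then (1:ℝ) else -1)) :=
    Set.Finite.bddAbove (Set.finite_range _)
  apply le_antisymm
  · -- split ≤ A
    apply ciSup_le
    intro p
    set u : Fin n → ℝ := fun i => (∑ s : Fin (k i : ℕ), sgn (p.1 ⟨i, s⟩)) / ((k i : ℕ) : ℝ)
    set v : Fin m → ℝ := fun j => (∑ t : Fin (l j : ℕ), sgn (p.2 ⟨j, t⟩)) / ((l j : ℕ) : ℝ)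
    have hu : ∀ i, |u i| ≤ 1 := by
      intro i
      rw [abs_div, abs_of_pos (hk i), div_le_one (hk i)]
      calc |∑ s : Fin (k i : ℕ), sgn (p.1 ⟨i, s⟩)| ≤ ∑ s : Fin (k i : ℕ), |sgn (p.1 ⟨i, s⟩)| :=
            Finset.abs_sum_le_sum_abs _ _
        _ = ((k i : ℕ) : ℝ) := by
            simp only [show ∀ b, |sgn b| = 1 from fun b => by cases b <;> simp [sgn]]
            simp
    have hv : ∀ j, |v j| ≤ 1 := by
      intro j
      rw [abs_div, abs_of_pos (hl j), div_le_one (hl j)]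
      calc |∑ t : Fin (l j : ℕ), sgn (p.2 ⟨j, t⟩)| ≤ ∑ t : Fin (l j : ℕ), |sgn (p.2 ⟨j, t⟩)| :=
            Finset.abs_sum_le_sum_abs _ _
        _ = ((l j : ℕ) : ℝ) := by
            simp only [show ∀ b, |sgn b| = 1 from fun b => by cases b <;> simp [sgn]]
            simp
    have per : ∀ i j, (∑ s : Fin (k i : ℕ), ∑ t : Fin (l j : ℕ),
        sgn (p.1 ⟨i, s⟩) * (A i j / (((k i : ℕ):ℝ) * ((l j : ℕ):ℝ))) * sgn (p.2 ⟨j, t⟩))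
        = u i * A i j * v j := by
      intro i j
      simp_rw [← Finset.mul_sum, ← Finset.sum_mul]
      have h1 := (hk i).ne'
      have h2 := (hl j).ne'
      simp only [u, v]
      field_simp
    have key : ∑ i, ∑ j, (if p.1 i then (1:ℝ) else -1) * splitMatrix A k l i j *
        (if p.2 j then (1:ℝ) else -1) = ∑ i, ∑ j, u i * A i j * v j := by
      rw [← Finset.univ_sigma_univ, Finset.sum_sigma]
      apply Finset.sum_congr rfl; intro i _
      calc ∑ s : Fin (k i : ℕ), ∑ q : (j : Fin m) × Fin (l j : ℕ),
            (if p.1 ⟨i, s⟩ then (1:ℝ) else -1) * splitMatrix A k l ⟨i, s⟩ q *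
            (if p.2 q then (1:ℝ) else -1)
          = ∑ s : Fin (k i : ℕ), ∑ j, ∑ t : Fin (l j : ℕ),
            sgn (p.1 ⟨i, s⟩) * (A i j / (((k i : ℕ):ℝ) * ((l j : ℕ):ℝ))) * sgn (p.2 ⟨j, t⟩) := by
            apply Finset.sum_congr rfl; intro s _
            rw [← Finset.univ_sigma_univ, Finset.sum_sigma]
            apply Finset.sum_congr rfl; intro j _
            apply Finset.sum_congr rfl; intro t _
            simp [splitMatrix, sgn]
        _ = ∑ j, ∑ s : Fin (k i : ℕ), ∑ t : Fin (l j : ℕ),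
            sgn (p.1 ⟨i, s⟩) * (A i j / (((k i : ℕ):ℝ) * ((l j : ℕ):ℝ))) * sgn (p.2 ⟨j, t⟩) :=
            Finset.sum_comm
        _ = ∑ j, u i * A i j * v j := Finset.sum_congr rfl fun j _ => per i j
    rw [key]
    exact bilinear_le_normInftyOne A u v hu hv
  · -- A ≤ split
    apply ciSup_le
    intro p
    have key : ∑ i, ∑ j, (if p.1 i then (1:ℝ) else -1) * A i j * (if p.2 j then (1:ℝ) else -1)
        = ∑ i, ∑ j, (if p.1 i.1 then (1:ℝ) else -1) * splitMatrix A k l i j *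
          (if p.2 j.1 then (1:ℝ) else -1) := by
      rw [← Finset.univ_sigma_univ, Finset.sum_sigma]
      apply Finset.sum_congr rfl; intro i _
      rw [show (∑ j, (if p.1 i then (1:ℝ) else -1) * A i j * (if p.2 j then (1:ℝ) else -1)) =
        ∑ s : Fin (k i : ℕ), ∑ j, (if p.1 i then (1:ℝ) else -1) *
          (A i j / ((k i : ℕ):ℝ)) * (if p.2 j then (1:ℝ) else -1) from ?_]
      · apply Finset.sum_congr rfl; intro s _
        rw [← Finset.univ_sigma_univ, Finset.sum_sigma]
        apply Finset.sum_congr rfl; intro j _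
        rw [show (∑ t : Fin (l j : ℕ), (if p.1 i then (1:ℝ) else -1) *
            splitMatrix A k l ⟨i, s⟩ ⟨j, t⟩ * (if p.2 j then (1:ℝ) else -1)) =
          ∑ t : Fin (l j : ℕ), (if p.1 i then (1:ℝ) else -1) *
            (A i j / (((k i : ℕ):ℝ) * ((l j : ℕ):ℝ))) * (if p.2 j then (1:ℝ) else -1) from rfl]
        rw [Finset.sum_const, Finset.card_univ, Fintype.card_fin, nsmul_eq_mul]
        have := (hl j).ne'
        field_simp
      · rw [Finset.sum_const, Finset.card_univ, Fintype.card_fin, nsmul_eq_mul,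
          Finset.mul_sum]
        apply Finset.sum_congr rfl; intro j _
        have := (hk i).ne'
        field_simp
    calc _ = _ := key
      _ ≤ _ := le_ciSup hbS (fun q => p.1 q.1, fun q => p.2 q.1)
end
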